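/- arXiv:1710.04039 — 6 statements merged into one kernel-verified Lean document; each statement's English description precedes it below -/
import Mathlib

section
/- For every natural number N ≥ 1, the partial sums of μ(n)/n are bounded by one in absolute value: |∑_{n ≤ N} μ(n)/n| ≤ 1. -/
open ArithmeticFunction Finset

-- ∑_{d ≤ N} μ(d) ⌊N/d⌋ = 1
lemma key_moebius_floor (N : ℕ) (hN : 1 ≤ N) :
    ∑ d ∈ Finset.Icc 1 N, (moebius d : ℤ) * (N / d : ℕ) = 1 := by
  have hdiv : ∀ m ∈ Finset.Icc 1 N, (Finset.Icc 1 N).filter (· ∣ m) = m.divisors := by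
    intro m hm
    rw [Finset.mem_Icc] at hm
    ext d
    simp only [Finset.mem_filter, Finset.mem_Icc, Nat.mem_divisors]
    constructor
    · rintro ⟨⟨h1, _⟩, hd⟩; exact ⟨hd, by omega⟩
    · rintro ⟨hd, hm0⟩
      refine ⟨⟨Nat.one_le_iff_ne_zero.2 ?_, le_trans (Nat.le_of_dvd (by omega) hd) hm.2⟩, hd⟩
      rintro rfl; exact hm0 (Nat.zero_dvd.1 hd)
  have h1 : ∑ m ∈ Finset.Icc 1 N, ∑ d ∈ m.divisors, (moebius d : ℤ) = 1 := by
    have : ∀ m ∈ Finset.Icc 1 N, ∑ d ∈ m.divisors, (moebius d : ℤ) =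
        if m = 1 then 1 else 0 := by
      intro m hm
      have h := congrArg (fun f : ArithmeticFunction ℤ => f m) moebius_mul_coe_zeta
      simp only [coe_mul_zeta_apply, one_apply] at h
      exact h
    rw [Finset.sum_congr rfl this]
    simp [Finset.sum_ite_eq' (Finset.Icc 1 N) 1, hN]
  calc ∑ d ∈ Finset.Icc 1 N, (moebius d : ℤ) * (N / d : ℕ)
      = ∑ d ∈ Finset.Icc 1 N, ∑ m ∈ (Finset.Icc 1 N).filter (d ∣ ·), (moebius d : ℤ) := by
        refine Finset.sum_congr rfl fun d _ => ?_
        rw [Finset.sum_const, nsmul_eq_mul, mul_comm]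
        congr 1
        rw [show Finset.Icc 1 N = Finset.Ioc 0 N from rfl,
          Nat.Ioc_filter_dvd_card_eq_div N d]
    _ = ∑ d ∈ Finset.Icc 1 N, ∑ m ∈ Finset.Icc 1 N, if d ∣ m then (moebius d : ℤ) else 0 :=
        Finset.sum_congr rfl fun d _ => Finset.sum_filter _ _
    _ = ∑ m ∈ Finset.Icc 1 N, ∑ d ∈ Finset.Icc 1 N, if d ∣ m then (moebius d : ℤ) else 0 :=
        Finset.sum_comm
    _ = ∑ m ∈ Finset.Icc 1 N, ∑ d ∈ m.divisors, (moebius d : ℤ) := by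
        refine Finset.sum_congr rfl fun m hm => ?_
        rw [← Finset.sum_filter, hdiv m hm]
    _ = 1 := h1

theorem abs_sum_moebius_div_le_one (N : ℕ) (hN : 1 ≤ N) :
    |∑ n ∈ Finset.Icc 1 N, (ArithmeticFunction.moebius n : ℝ) / n| ≤ 1 := by
  rcases eq_or_lt_of_le hN with h1 | h2
  · simp [← h1]
  -- N ≥ 2
  have hNpos : (0:ℝ) < N := by positivity
  rw [abs_le]
  have key : ∑ d ∈ Finset.Icc 1 N, (moebius d : ℝ) * (N / d : ℕ) = 1 := by
    have h' : ((∑ d ∈ Finset.Icc 1 N, (moebius d : ℤ) * (N / d : ℕ) : ℤ) : ℝ) = 1 := by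
      rw [key_moebius_floor N hN]; norm_num
    push_cast at h'
    exact h'
  set f : ℕ → ℝ := fun n => (N : ℝ) / n - (N / n : ℕ) with hf
  have hsplit : (N : ℝ) * ∑ n ∈ Finset.Icc 1 N, (moebius n : ℝ) / n
      = 1 + ∑ n ∈ Finset.Icc 1 N, (moebius n : ℝ) * f n := by
    rw [Finset.mul_sum, ← key, ← Finset.sum_add_distrib]
    refine Finset.sum_congr rfl fun n hn => ?_
    rw [Finset.mem_Icc] at hn
    have hn0 : (n:ℝ) ≠ 0 := by exact_mod_cast (by omega : n ≠ 0)
    field_simp [hf]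
    simp only [hf]
    have e : (n:ℝ) * ((N:ℝ) / n) = N := by field_simp
    linear_combination (-(moebius n : ℝ)) * e
  have hfbound : ∀ n ∈ Finset.Icc 1 N, |(moebius n : ℝ) * f n| ≤
      if n = 1 ∨ n = N then 0 else 1 := by
    intro n hn
    rw [Finset.mem_Icc] at hn
    have hn0 : 0 < n := hn.1
    have hnn0 : (0:ℝ) < n := by exact_mod_cast hn0
    have hle : (↑(N / n) : ℝ) ≤ (N:ℝ) / n := by
      rw [le_div_iff₀ hnn0]
      exact_mod_cast Nat.div_mul_le_self N n
    have hlt : (N:ℝ) / n < (↑(N / n) : ℝ) + 1 := by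
      rw [div_lt_iff₀ hnn0]
      have h2 := Nat.div_add_mod N n
      have h3 := Nat.mod_lt N hn0
      have h4 : N < (N / n + 1) * n := by
        calc N = n * (N / n) + N % n := h2.symm
          _ < n * (N / n) + n := Nat.add_lt_add_left h3 _
          _ = (N / n + 1) * n := by ring
      exact_mod_cast h4
    have hf0 : 0 ≤ f n := by simp [hf]; linarith
    have hf1 : f n ≤ 1 := by simp [hf]; linarith
    by_cases hc : n = 1 ∨ n = N
    · have : f n = 0 := by
        rcases hc with rfl | rfl
        · simp [hf]
        · simp [hf, Nat.div_self hn0, div_self hnn0.ne']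
      simp [hc, this]
    · rw [if_neg hc, abs_mul]
      have hm : |(moebius n : ℝ)| ≤ 1 := by
        have := abs_moebius_le_one (n := n)
        exact_mod_cast this
      calc |(moebius n : ℝ)| * |f n| ≤ 1 * 1 := by
            apply mul_le_mul hm _ (abs_nonneg _) zero_le_one
            rw [abs_le]; constructor <;> linarith
        _ = 1 := one_mul 1
  have hcard : ∑ n ∈ Finset.Icc 1 N, (if n = 1 ∨ n = N then (0:ℝ) else 1) ≤ (N : ℝ) - 2 := by
    have : ∑ n ∈ Finset.Icc 1 N, (if n = 1 ∨ n = N then (0:ℝ) else 1)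
        = ((Finset.Icc 1 N).filter (fun n => ¬(n = 1 ∨ n = N))).card := by
      rw [Finset.sum_ite, Finset.sum_const, Finset.sum_const]
      simp
    rw [this]
    have hsub : (Finset.Icc 1 N).filter (fun n => ¬(n = 1 ∨ n = N)) ⊆ Finset.Icc 2 (N-1) := by
      intro n hn
      simp only [Finset.mem_filter, Finset.mem_Icc, not_or] at hn ⊢
      omega
    have := Finset.card_le_card hsub
    have hc2 : (Finset.Icc 2 (N-1)).card = N - 2 := by
      rw [Nat.card_Icc]; omega
    have : ((Finset.Icc 1 N).filter (fun n => ¬(n = 1 ∨ n = N))).card ≤ N - 2 := by omega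
    calc (((Finset.Icc 1 N).filter (fun n => ¬(n = 1 ∨ n = N))).card : ℝ)
        ≤ ((N - 2 : ℕ) : ℝ) := by exact_mod_cast this
      _ ≤ (N : ℝ) - 2 := by
          have : (2:ℕ) ≤ N := h2
          push_cast [Nat.cast_sub this]
          linarith
  have habs : |∑ n ∈ Finset.Icc 1 N, (moebius n : ℝ) * f n| ≤ (N:ℝ) - 2 :=
    le_trans (Finset.abs_sum_le_sum_abs _ _) (le_trans (Finset.sum_le_sum hfbound) hcard)
  rw [abs_le] at habs
  constructor
  · nlinarith [hsplit, habs.1, hNpos]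
  · nlinarith [hsplit, habs.2, hNpos]
end

section
/- The distance function D on multiplicative functions bounded by 1 satisfies the triangle inequality: for all u, v, w in the class M, D(u, v) ≤ D(u, w) + D(w, v). -/
open scoped ENNReal

/-- The "pretentious" distance between two arithmetic functions, with values in `[0,∞]`. -/
noncomputable def Ddist (u v : ℕ → ℂ) : ℝ≥0∞ :=
  (∑' p : Nat.Primes,
      ENNReal.ofReal ((1 - (u p * starRingEnd ℂ (v p)).re) / p)) ^ (1 / 2 : ℝ)

private lemma ddist_lem1 (x y z p q r : ℝ) (hx : 0 ≤ x) (hy : 0 ≤ y) (hz : 0 ≤ z)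
    (hp : 0 ≤ p) (hq : 0 ≤ q) (hr : 0 ≤ r) (hzxy : z ≤ x + y) :
    Real.sqrt (z^2 + (p+q)^2) ≤ Real.sqrt (x^2 + p^2 + r^2) + Real.sqrt (y^2 + q^2 + r^2) := by
  set B := x^2 + p^2 + r^2 with hB
  set C := y^2 + q^2 + r^2 with hC
  have hBnn : 0 ≤ B := by positivity
  have hCnn : 0 ≤ C := by positivity
  have key : z^2 + (p+q)^2 ≤ (Real.sqrt B + Real.sqrt C)^2 := by
    have h1 : z^2 + (p+q)^2 ≤ (x+y)^2 + (p+q)^2 := by nlinarith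
    have h2 : x*y + p*q - r^2 ≤ Real.sqrt B * Real.sqrt C := by
      rcases le_or_gt (x*y + p*q - r^2) 0 with h | h
      · exact h.trans (by positivity)
      · rw [← Real.sqrt_mul hBnn]
        rw [show x*y + p*q - r^2 = Real.sqrt ((x*y+p*q-r^2)^2) from (Real.sqrt_sq h.le).symm]
        apply Real.sqrt_le_sqrt
        nlinarith [sq_nonneg (x*q - p*y), sq_nonneg (x*r - r*y), sq_nonneg (p*r - r*q)]
    have hsB := Real.sq_sqrt hBnn
    have hsC := Real.sq_sqrt hCnn
    nlinarith
  calc Real.sqrt (z^2 + (p+q)^2) ≤ Real.sqrt ((Real.sqrt B + Real.sqrt C)^2) :=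
        Real.sqrt_le_sqrt key
    _ = Real.sqrt B + Real.sqrt C := Real.sqrt_sq (by positivity)

private lemma ddist_lem2 (a b c : ℂ) (ha : ‖a‖ ≤ 1) (hb : ‖b‖ ≤ 1)
    (hc : ‖c‖ ≤ 1) :
    Real.sqrt (1 - (a * starRingEnd ℂ c).re) ≤
      Real.sqrt (1 - (a * starRingEnd ℂ b).re) + Real.sqrt (1 - (b * starRingEnd ℂ c).re) := by
  set ra := Real.sqrt (1 - ‖a‖ ^ 2) with hra
  set rb := Real.sqrt (1 - ‖b‖ ^ 2) with hrb
  set rc := Real.sqrt (1 - ‖c‖ ^ 2) with hrc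
  have hra2 : ra^2 = 1 - ‖a‖ ^ 2 := Real.sq_sqrt (by nlinarith [norm_nonneg a])
  have hrb2 : rb^2 = 1 - ‖b‖ ^ 2 := Real.sq_sqrt (by nlinarith [norm_nonneg b])
  have hrc2 : rc^2 = 1 - ‖c‖ ^ 2 := Real.sq_sqrt (by nlinarith [norm_nonneg c])
  have hran : 0 ≤ ra := Real.sqrt_nonneg _
  have hrbn : 0 ≤ rb := Real.sqrt_nonneg _
  have hrcn : 0 ≤ rc := Real.sqrt_nonneg _
  have habs : ∀ s t : ℂ, ‖s - t‖ ^ 2 =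
      ‖s‖ ^ 2 + ‖t‖ ^ 2 - 2 * (s * starRingEnd ℂ t).re := by
    intro s t
    rw [Complex.sq_norm, Complex.normSq_sub, ← Complex.sq_norm s, ← Complex.sq_norm t]
  set x := ‖a - b‖
  set y := ‖b - c‖
  set z := ‖a - c‖
  have hx : 0 ≤ x := norm_nonneg _
  have hy : 0 ≤ y := norm_nonneg _
  have hz : 0 ≤ z := norm_nonneg _
  have htri : z ≤ x + y := by
    have := norm_sub_le_norm_sub_add_norm_sub a b c
    simpa using this
  have key := ddist_lem1 x y z ra rc rb hx hy hz hran hrcn hrbn htri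
  have hexp : (ra+rc)^2 = ra^2 + 2*(ra*rc) + rc^2 := by ring
  have e1 : z^2 + (ra+rc)^2 = 2 * (1 - (a * starRingEnd ℂ c).re) + 2 * (ra * rc) := by
    have h := habs a c; rw [hexp]; linarith
  have e2 : x^2 + ra^2 + rb^2 = 2 * (1 - (a * starRingEnd ℂ b).re) := by
    have h := habs a b; linarith
  have e3 : y^2 + rc^2 + rb^2 = 2 * (1 - (b * starRingEnd ℂ c).re) := by
    have h := habs b c; linarith
  have hle : Real.sqrt (2 * (1 - (a * starRingEnd ℂ c).re)) ≤
      Real.sqrt (2 * (1 - (a * starRingEnd ℂ b).re)) +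
        Real.sqrt (2 * (1 - (b * starRingEnd ℂ c).re)) := by
    calc Real.sqrt (2 * (1 - (a * starRingEnd ℂ c).re))
        ≤ Real.sqrt (z^2 + (ra+rc)^2) := by
          apply Real.sqrt_le_sqrt
          rw [e1]; nlinarith
      _ ≤ _ := by rw [e2, e3] at key; exact key
  rw [Real.sqrt_mul (by norm_num : (0:ℝ) ≤ 2), Real.sqrt_mul (by norm_num : (0:ℝ) ≤ 2),
    Real.sqrt_mul (by norm_num : (0:ℝ) ≤ 2), ← mul_add] at hle
  exact le_of_mul_le_mul_left hle (Real.sqrt_pos.mpr (by norm_num))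

/-- Minkowski inequality for `ℝ≥0∞`-valued tsums with exponent 2. -/
private lemma ddist_minkowski {ι : Type*} (F G : ι → ℝ≥0∞) :
    (∑' i, (F i + G i) ^ (2:ℝ)) ^ (1/2 : ℝ) ≤
      (∑' i, F i ^ (2:ℝ)) ^ (1/2 : ℝ) + (∑' i, G i ^ (2:ℝ)) ^ (1/2 : ℝ) := by
  set A := (∑' i, F i ^ (2:ℝ)) ^ (1/2 : ℝ)
  set B := (∑' i, G i ^ (2:ℝ)) ^ (1/2 : ℝ)
  have hmain : ∑' i, (F i + G i) ^ (2:ℝ) ≤ (A + B) ^ (2:ℝ) := by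
    rw [ENNReal.tsum_eq_iSup_sum]
    apply iSup_le
    intro s
    have h := ENNReal.Lp_add_le s F G (by norm_num : (1:ℝ) ≤ 2)
    have hA : (∑ i ∈ s, F i ^ (2:ℝ)) ^ (1/2 : ℝ) ≤ A :=
      ENNReal.rpow_le_rpow (ENNReal.sum_le_tsum s) (by norm_num)
    have hB : (∑ i ∈ s, G i ^ (2:ℝ)) ^ (1/2 : ℝ) ≤ B :=
      ENNReal.rpow_le_rpow (ENNReal.sum_le_tsum s) (by norm_num)
    calc ∑ i ∈ s, (F i + G i) ^ (2:ℝ)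
        = ((∑ i ∈ s, (F i + G i) ^ (2:ℝ)) ^ (1/2 : ℝ)) ^ (2:ℝ) := by
          rw [← ENNReal.rpow_mul]; norm_num
      _ ≤ (A + B) ^ (2:ℝ) :=
          ENNReal.rpow_le_rpow (h.trans (add_le_add hA hB)) (by norm_num)
  calc (∑' i, (F i + G i) ^ (2:ℝ)) ^ (1/2 : ℝ)
      ≤ ((A + B) ^ (2:ℝ)) ^ (1/2 : ℝ) := ENNReal.rpow_le_rpow hmain (by norm_num)
    _ = A + B := by rw [← ENNReal.rpow_mul]; norm_num

theorem Ddist_triangle (u v w : ℕ → ℂ)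
    (hu1 : u 1 = 1) (hu : ∀ m n : ℕ, Nat.Coprime m n → u (m * n) = u m * u n)
    (hub : ∀ n : ℕ, ‖u n‖ ≤ 1)
    (hv1 : v 1 = 1) (hv : ∀ m n : ℕ, Nat.Coprime m n → v (m * n) = v m * v n)
    (hvb : ∀ n : ℕ, ‖v n‖ ≤ 1)
    (hw1 : w 1 = 1) (hw : ∀ m n : ℕ, Nat.Coprime m n → w (m * n) = w m * w n)
    (hwb : ∀ n : ℕ, ‖w n‖ ≤ 1) :
    Ddist u v ≤ Ddist u w + Ddist w v := by
  set F : Nat.Primes → ℝ≥0∞ := fun p =>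
    ENNReal.ofReal ((1 - (u p * starRingEnd ℂ (w p)).re) / p) ^ (1/2 : ℝ) with hF
  set G : Nat.Primes → ℝ≥0∞ := fun p =>
    ENNReal.ofReal ((1 - (w p * starRingEnd ℂ (v p)).re) / p) ^ (1/2 : ℝ) with hG
  have nonneg : ∀ (f g : ℕ → ℂ), (∀ n, ‖f n‖ ≤ 1) →
      (∀ n, ‖g n‖ ≤ 1) → ∀ n : ℕ, 0 ≤ 1 - (f n * starRingEnd ℂ (g n)).re := by
    intro f g hf hg n
    have h1 : (f n * starRingEnd ℂ (g n)).re ≤ ‖f n * starRingEnd ℂ (g n)‖ :=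
      Complex.re_le_norm _
    have h2 : ‖f n * starRingEnd ℂ (g n)‖ ≤ 1 := by
      rw [norm_mul, Complex.norm_conj]
      exact mul_le_one₀ (hf n) (norm_nonneg _) (hg n)
    linarith
  -- pointwise bound
  have pointwise : ∀ p : Nat.Primes,
      ENNReal.ofReal ((1 - (u p * starRingEnd ℂ (v p)).re) / p) ≤ (F p + G p) ^ (2:ℝ) := by
    intro p
    set P : ℝ := ((p : ℕ) : ℝ) with hP
    have hPpos : (0:ℝ) < P := by
      rw [hP]
      exact_mod_cast p.2.pos
    set a1 : ℝ := 1 - (u p * starRingEnd ℂ (v p)).re with ha1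
    set b1 : ℝ := 1 - (u p * starRingEnd ℂ (w p)).re with hb1
    set c1 : ℝ := 1 - (w p * starRingEnd ℂ (v p)).re with hc1
    have hA : 0 ≤ a1 := nonneg u v hub hvb p
    have hB : 0 ≤ b1 := nonneg u w hub hwb p
    have hC : 0 ≤ c1 := nonneg w v hwb hvb p
    have tri : Real.sqrt a1 ≤ Real.sqrt b1 + Real.sqrt c1 :=
      ddist_lem2 (u p) (w p) (v p) (hub p) (hwb p) (hvb p)
    have tridiv : Real.sqrt (a1 / P) ≤ Real.sqrt (b1 / P) + Real.sqrt (c1 / P) := by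
      rw [Real.sqrt_div hA, Real.sqrt_div hB, Real.sqrt_div hC, ← add_div]
      gcongr
    have hsq : a1 / P ≤ (Real.sqrt (b1/P) + Real.sqrt (c1/P))^2 := by
      have h0 : a1 / P = Real.sqrt (a1/P)^2 := (Real.sq_sqrt (by positivity)).symm
      rw [h0]
      exact pow_le_pow_left₀ (Real.sqrt_nonneg _) tridiv 2
    have hFG : (F p + G p) ^ (2:ℝ) =
        ENNReal.ofReal ((Real.sqrt (b1/P) + Real.sqrt (c1/P))^2) := by
      rw [hF, hG]
      simp only []
      rw [ENNReal.ofReal_rpow_of_nonneg (by positivity) (by norm_num : (0:ℝ) ≤ 1/2),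
        ENNReal.ofReal_rpow_of_nonneg (by positivity) (by norm_num : (0:ℝ) ≤ 1/2),
        ← Real.sqrt_eq_rpow, ← Real.sqrt_eq_rpow,
        ← ENNReal.ofReal_add (Real.sqrt_nonneg _) (Real.sqrt_nonneg _),
        ENNReal.ofReal_rpow_of_nonneg (by positivity) (by norm_num : (0:ℝ) ≤ 2),
        Real.rpow_two]
    rw [hFG]
    exact ENNReal.ofReal_le_ofReal hsq
  have sum_le : (∑' p : Nat.Primes,
        ENNReal.ofReal ((1 - (u p * starRingEnd ℂ (v p)).re) / p)) ≤
      ∑' p : Nat.Primes, (F p + G p) ^ (2:ℝ) :=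
    ENNReal.tsum_le_tsum pointwise
  have hFsum : ∑' p : Nat.Primes, F p ^ (2:ℝ) =
      ∑' p : Nat.Primes, ENNReal.ofReal ((1 - (u p * starRingEnd ℂ (w p)).re) / p) := by
    apply tsum_congr
    intro p
    rw [hF]
    simp only []
    rw [← ENNReal.rpow_mul]
    norm_num
  have hGsum : ∑' p : Nat.Primes, G p ^ (2:ℝ) =
      ∑' p : Nat.Primes, ENNReal.ofReal ((1 - (w p * starRingEnd ℂ (v p)).re) / p) := by
    apply tsum_congr
    intro p
    rw [hG]
    simp only []
    rw [← ENNReal.rpow_mul]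
    norm_num
  rw [Ddist, Ddist, Ddist]
  calc (∑' p : Nat.Primes,
        ENNReal.ofReal ((1 - (u p * starRingEnd ℂ (v p)).re) / p)) ^ (1 / 2 : ℝ)
      ≤ (∑' p : Nat.Primes, (F p + G p) ^ (2:ℝ)) ^ (1/2 : ℝ) :=
        ENNReal.rpow_le_rpow sum_le (by norm_num)
    _ ≤ (∑' p : Nat.Primes, F p ^ (2:ℝ)) ^ (1/2 : ℝ) +
          (∑' p : Nat.Primes, G p ^ (2:ℝ)) ^ (1/2 : ℝ) := ddist_minkowski F G
    _ = _ := by rw [hFsum, hGsum]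
end

section
/- For multiplicative functions u, v, w, w' bounded by 1, the distance D satisfies D(u·w, v·w') ≤ D(u, v) + D(w, w'), where u·w denotes the pointwise product. -/
open scoped ENNReal

/-- Key pointwise inequality. -/
lemma key_re (z1 z2 : ℂ) (h1 : ‖z1‖ ≤ 1) (h2 : ‖z2‖ ≤ 1) :
    1 - (z1 * z2).re ≤
      (Real.sqrt (1 - z1.re) + Real.sqrt (1 - z2.re)) ^ 2 := by
  have hn1 : z1.re ^ 2 + z1.im ^ 2 ≤ 1 := by
    have := Complex.sq_norm z1
    nlinarith [Complex.sq_norm z1, Complex.normSq_apply z1, norm_nonneg z1]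
  have hn2 : z2.re ^ 2 + z2.im ^ 2 ≤ 1 := by
    nlinarith [Complex.sq_norm z2, Complex.normSq_apply z2, norm_nonneg z2]
  have hx1 : z1.re ≤ 1 := by nlinarith [sq_nonneg z1.im]
  have hx2 : z2.re ≤ 1 := by nlinarith [sq_nonneg z2.im]
  have hA : (0:ℝ) ≤ 1 - z1.re := by linarith
  have hB : (0:ℝ) ≤ 1 - z2.re := by linarith
  have ha : Real.sqrt (1 - z1.re) ^ 2 = 1 - z1.re := Real.sq_sqrt hA
  have hb : Real.sqrt (1 - z2.re) ^ 2 = 1 - z2.re := Real.sq_sqrt hB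
  have hre : (z1 * z2).re = z1.re * z2.re - z1.im * z2.im := Complex.mul_re z1 z2
  -- y1 * y2 ≤ 2 * √A * √B
  have hy1 : z1.im ^ 2 ≤ 2 * (1 - z1.re) := by nlinarith
  have hy2 : z2.im ^ 2 ≤ 2 * (1 - z2.re) := by nlinarith
  have hs1 : 0 ≤ Real.sqrt (1 - z1.re) := Real.sqrt_nonneg _
  have hs2 : 0 ≤ Real.sqrt (1 - z2.re) := Real.sqrt_nonneg _
  have hy : z1.im * z2.im ≤ 2 * (Real.sqrt (1 - z1.re) * Real.sqrt (1 - z2.re)) := by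
    nlinarith [sq_nonneg (z1.im * z2.im - 2 * (Real.sqrt (1 - z1.re) * Real.sqrt (1 - z2.re))),
      mul_nonneg hs1 hs2, sq_nonneg (z1.im + z2.im), sq_nonneg (z1.im - z2.im)]
  nlinarith [mul_nonneg hA hB]

lemma ofReal_sq' (x : ℝ) (hx : 0 ≤ x) :
    ENNReal.ofReal x ^ (2:ℝ) = ENNReal.ofReal (x ^ 2) := by
  rw [ENNReal.ofReal_rpow_of_nonneg hx (by norm_num : (0:ℝ) ≤ 2), Real.rpow_two]

lemma ENNReal.Lp_add_le_tsum' {ι : Type*} (f g : ι → ℝ≥0∞) {p : ℝ} (hp : 1 ≤ p) :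
    (∑' i, (f i + g i) ^ p) ^ (1 / p) ≤
      (∑' i, f i ^ p) ^ (1 / p) + (∑' i, g i ^ p) ^ (1 / p) := by
  have hp0 : 0 < p := lt_of_lt_of_le zero_lt_one hp
  have hiff : ∀ x y : ℝ≥0∞, x ^ (1 / p) ≤ y ↔ x ≤ y ^ p := fun x y => by
    rw [one_div]; exact ENNReal.rpow_inv_le_iff hp0
  rw [hiff, ENNReal.tsum_eq_iSup_sum]
  refine iSup_le fun s => ?_
  calc ∑ i ∈ s, (f i + g i) ^ p
      ≤ ((∑ i ∈ s, f i ^ p) ^ (1/p) + (∑ i ∈ s, g i ^ p) ^ (1/p)) ^ p := by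
        rw [← hiff]
        exact ENNReal.Lp_add_le s f g hp
    _ ≤ ((∑' i, f i ^ p) ^ (1/p) + (∑' i, g i ^ p) ^ (1/p)) ^ p := by
        gcongr <;> exact ENNReal.sum_le_tsum s

theorem Ddist_mul_le (u v w w' : ℕ → ℂ)
    (hu1 : u 1 = 1) (hu : ∀ m n : ℕ, Nat.Coprime m n → u (m * n) = u m * u n)
    (hub : ∀ n : ℕ, ‖u n‖ ≤ 1)
    (hv1 : v 1 = 1) (hv : ∀ m n : ℕ, Nat.Coprime m n → v (m * n) = v m * v n)
    (hvb : ∀ n : ℕ, ‖v n‖ ≤ 1)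
    (hw1 : w 1 = 1) (hw : ∀ m n : ℕ, Nat.Coprime m n → w (m * n) = w m * w n)
    (hwb : ∀ n : ℕ, ‖w n‖ ≤ 1)
    (hw'1 : w' 1 = 1) (hw' : ∀ m n : ℕ, Nat.Coprime m n → w' (m * n) = w' m * w' n)
    (hw'b : ∀ n : ℕ, ‖w' n‖ ≤ 1) :
    Ddist (fun n => u n * w n) (fun n => v n * w' n) ≤ Ddist u v + Ddist w w' := by
  classical
  set F : Nat.Primes → ℝ≥0∞ := fun p =>
    ENNReal.ofReal (Real.sqrt ((1 - (u p * starRingEnd ℂ (v p)).re) / p)) with hF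
  set G : Nat.Primes → ℝ≥0∞ := fun p =>
    ENNReal.ofReal (Real.sqrt ((1 - (w p * starRingEnd ℂ (w' p)).re) / p)) with hG
  have hppos : ∀ p : Nat.Primes, (0:ℝ) < (p:ℕ) := fun p =>
    Nat.cast_pos.mpr p.2.pos
  have habs : ∀ (a b : ℕ → ℂ), (∀ n, ‖a n‖ ≤ 1) → (∀ n, ‖b n‖ ≤ 1) →
      ∀ n, ‖a n * starRingEnd ℂ (b n)‖ ≤ 1 := by
    intro a b ha hb n
    rw [norm_mul, Complex.norm_conj]
    exact mul_le_one₀ (ha n) (norm_nonneg _) (hb n)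
  have hAnn : ∀ (a b : ℕ → ℂ), (∀ n, ‖a n‖ ≤ 1) → (∀ n, ‖b n‖ ≤ 1) →
      ∀ p : Nat.Primes, (0:ℝ) ≤ (1 - (a p * starRingEnd ℂ (b p)).re) / p := by
    intro a b ha hb p
    apply div_nonneg _ (hppos p).le
    have : (a p * starRingEnd ℂ (b p)).re ≤ 1 := by
      calc (a p * starRingEnd ℂ (b p)).re ≤ ‖a p * starRingEnd ℂ (b p)‖ :=
        Complex.re_le_norm _
      _ ≤ 1 := habs a b ha hb p
    linarith
  -- pointwise bound
  have hpt : ∀ p : Nat.Primes,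
      ENNReal.ofReal ((1 - ((u p * w p) * starRingEnd ℂ (v p * w' p)).re) / p)
        ≤ (F p + G p) ^ (2:ℝ) := by
    intro p
    set z1 := u p * starRingEnd ℂ (v p)
    set z2 := w p * starRingEnd ℂ (w' p)
    have hz : (u p * w p) * starRingEnd ℂ (v p * w' p) = z1 * z2 := by
      simp only [map_mul, z1, z2]; ring
    have hz1 : ‖z1‖ ≤ 1 := habs u v hub hvb p
    have hz2 : ‖z2‖ ≤ 1 := habs w w' hwb hw'b p
    have hA : (0:ℝ) ≤ 1 - z1.re := by
      have := Complex.re_le_norm z1; linarith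
    have hB : (0:ℝ) ≤ 1 - z2.re := by
      have := Complex.re_le_norm z2; linarith
    have hkey := key_re z1 z2 hz1 hz2
    have hsum : F p + G p =
        ENNReal.ofReal (Real.sqrt ((1 - z1.re) / p) + Real.sqrt ((1 - z2.re) / p)) := by
      rw [ENNReal.ofReal_add (Real.sqrt_nonneg _) (Real.sqrt_nonneg _)]
    rw [hz, hsum, ofReal_sq' _ (by positivity)]
    apply ENNReal.ofReal_le_ofReal
    have hsd1 : Real.sqrt ((1 - z1.re) / p) = Real.sqrt (1 - z1.re) / Real.sqrt p :=
      Real.sqrt_div hA _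
    have hsd2 : Real.sqrt ((1 - z2.re) / p) = Real.sqrt (1 - z2.re) / Real.sqrt p :=
      Real.sqrt_div hB _
    have hsp : Real.sqrt ((p:ℕ):ℝ) ^ 2 = ((p:ℕ):ℝ) := Real.sq_sqrt (hppos p).le
    have hsppos : (0:ℝ) < Real.sqrt ((p:ℕ):ℝ) := Real.sqrt_pos.mpr (hppos p)
    rw [hsd1, hsd2, ← add_div, div_pow, hsp]
    gcongr
  -- assemble
  have h1 : Ddist (fun n => u n * w n) (fun n => v n * w' n)
      ≤ (∑' p : Nat.Primes, (F p + G p) ^ (2:ℝ)) ^ (1/2:ℝ) := by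
    unfold Ddist
    gcongr with p
    exact hpt p
  have hFsq : ∀ p : Nat.Primes, F p ^ (2:ℝ) =
      ENNReal.ofReal ((1 - (u p * starRingEnd ℂ (v p)).re) / p) := by
    intro p
    simp only [hF]
    rw [ofReal_sq' _ (Real.sqrt_nonneg _), Real.sq_sqrt (hAnn u v hub hvb p)]
  have hGsq : ∀ p : Nat.Primes, G p ^ (2:ℝ) =
      ENNReal.ofReal ((1 - (w p * starRingEnd ℂ (w' p)).re) / p) := by
    intro p
    simp only [hG]
    rw [ofReal_sq' _ (Real.sqrt_nonneg _), Real.sq_sqrt (hAnn w w' hwb hw'b p)]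
  have h2 := ENNReal.Lp_add_le_tsum' F G (by norm_num : (1:ℝ) ≤ 2)
  refine h1.trans (h2.trans ?_)
  unfold Ddist
  rw [tsum_congr hFsq, tsum_congr hGsq]
end

section
/- If u is a real-valued multiplicative function with |u| ≤ 1, then for every real t, D(1, n^{2it}) ≤ 2 · D(u, n^{it}), where n^{it} denotes the Archimedean character n ↦ n^{it}. -/
open scoped ENNReal

lemma cpow_re_aux (p : ℕ) (hp : 0 < p) (s : ℝ) :
    (((p : ℂ)) ^ (Complex.I * (s : ℂ))).re = Real.cos (Real.log p * s) := by
  have hne : (p : ℂ) ≠ 0 := by exact_mod_cast hp.ne'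
  have hlog : Complex.log (p : ℂ) = (Real.log p : ℂ) := by
    rw [show ((p : ℂ)) = ((p : ℝ) : ℂ) by push_cast; ring,
      Complex.ofReal_log (by positivity)]
  rw [Complex.cpow_def_of_ne_zero hne, hlog, Complex.exp_re]
  have h1 : ((Real.log p : ℂ) * (Complex.I * (s : ℂ))).re = 0 := by
    simp only [Complex.mul_re, Complex.mul_im, Complex.I_re, Complex.I_im,
      Complex.ofReal_re, Complex.ofReal_im]
    ring
  have h2 : ((Real.log p : ℂ) * (Complex.I * (s : ℂ))).im = Real.log p * s := by
    simp only [Complex.mul_re, Complex.mul_im, Complex.I_re, Complex.I_im,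
      Complex.ofReal_re, Complex.ofReal_im]
    ring
  rw [h1, h2]
  simp

lemma key_ineq (x c : ℝ) (hx1 : -1 ≤ x) (hx2 : x ≤ 1) :
    1 - (2 * c ^ 2 - 1) ≤ 4 * (1 - x * c) := by
  nlinarith [sq_nonneg (x - c),
    mul_nonneg (by linarith : (0:ℝ) ≤ 1 - x) (by linarith : (0:ℝ) ≤ 1 + x)]

theorem Ddist_one_arch_le_two_mul (u : ℕ → ℂ) (t : ℝ)
    (hu1 : u 1 = 1) (hu : ∀ m n : ℕ, Nat.Coprime m n → u (m * n) = u m * u n)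
    (hub : ∀ n : ℕ, ‖u n‖ ≤ 1)
    (hreal : ∀ n : ℕ, (u n).im = 0) :
    Ddist (fun _ => 1) (fun n => (n : ℂ) ^ (Complex.I * (2 * t : ℝ))) ≤
      2 * Ddist u (fun n => (n : ℂ) ^ (Complex.I * (t : ℝ))) := by
  unfold Ddist
  set S1 : ℝ≥0∞ := ∑' p : Nat.Primes,
      ENNReal.ofReal ((1 - (u p * starRingEnd ℂ
        (((p : ℕ) : ℂ) ^ (Complex.I * (t : ℝ)))).re) / p) with hS1
  set S2 : ℝ≥0∞ := ∑' p : Nat.Primes,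
      ENNReal.ofReal ((1 - ((1 : ℂ) * starRingEnd ℂ
        (((p : ℕ) : ℂ) ^ (Complex.I * (2 * t : ℝ)))).re) / p) with hS2
  have key : S2 ≤ 4 * S1 := by
    rw [hS1, hS2, ← ENNReal.tsum_mul_left]
    refine ENNReal.tsum_le_tsum fun p => ?_
    have hp0 : 0 < (p : ℕ) := p.2.pos
    have hp0' : (0 : ℝ) < (p : ℕ) := by exact_mod_cast hp0
    -- real parts
    have hre2 : ((1 : ℂ) * starRingEnd ℂ
        (((p : ℕ) : ℂ) ^ (Complex.I * (2 * t : ℝ)))).re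
        = Real.cos (Real.log (p : ℕ) * (2 * t)) := by
      rw [one_mul, Complex.conj_re, cpow_re_aux (p : ℕ) hp0 (2 * t)]
    have hre1 : (u p * starRingEnd ℂ
        (((p : ℕ) : ℂ) ^ (Complex.I * (t : ℝ)))).re
        = (u p).re * Real.cos (Real.log (p : ℕ) * t) := by
      rw [Complex.mul_re, Complex.conj_re, Complex.conj_im, hreal,
        cpow_re_aux (p : ℕ) hp0 t]
      ring
    rw [hre1, hre2]
    rw [← ENNReal.ofReal_ofNat, ← ENNReal.ofReal_mul (by norm_num)]
    apply ENNReal.ofReal_le_ofReal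
    rw [← mul_div_assoc]
    rw [div_le_div_iff_of_pos_right hp0']
    -- core inequality
    set c := Real.cos (Real.log (p : ℕ) * t) with hc
    set x := (u p).re with hx
    have hcos2 : Real.cos (Real.log (p : ℕ) * (2 * t)) = 2 * c ^ 2 - 1 := by
      rw [show Real.log (p : ℕ) * (2 * t) = 2 * (Real.log (p : ℕ) * t) by ring,
        Real.cos_two_mul]
    rw [hcos2]
    have hxb : |x| ≤ 1 := (Complex.abs_re_le_norm _).trans (hub p)
    have hcb : |c| ≤ 1 := Real.abs_cos_le_one _
    rw [abs_le] at hxb hcb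
    exact key_ineq x c hxb.1 hxb.2
  calc S2 ^ (1/2 : ℝ) ≤ (4 * S1) ^ (1/2 : ℝ) :=
        ENNReal.rpow_le_rpow key (by norm_num)
    _ = 2 * S1 ^ (1/2 : ℝ) := by
        rw [ENNReal.mul_rpow_of_nonneg _ _ (by norm_num)]
        congr 1
        rw [show (4 : ℝ≥0∞) = 2 ^ (2 : ℕ) by norm_num, ← ENNReal.rpow_natCast,
          ← ENNReal.rpow_mul]
        norm_num
end

section
/- If for every ε > 0 the Mertens function satisfies M(x) = ∑_{n ≤ x} μ(n) = O_ε(x^{1/2 + ε}), then the Riemann Hypothesis holds. -/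
open ArithmeticFunction Finset

open Complex MeasureTheory Filter Set Asymptotics Real

namespace MertensRH

noncomputable def mfun : ℝ → ℂ := fun x => ∑ n ∈ Finset.Icc 1 ⌊x⌋₊, (moebius n : ℂ)

lemma sum_eq_mfun (t : ℝ) : ∑ k ∈ Finset.Icc 0 ⌊t⌋₊, (moebius k : ℂ) = mfun t := by
  rw [Finset.Icc_eq_cons_Ioc (Nat.zero_le _), Finset.sum_cons, ← Finset.Icc_add_one_left_eq_Ioc]
  simp [mfun]

lemma mfun_measurable : Measurable mfun :=
  Measurable.comp (f := Nat.floor) (g := fun n : ℕ => ∑ k ∈ Finset.Icc 1 n, (moebius k : ℂ))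
    (measurable_from_top) Nat.measurable_floor

lemma norm_moebius_le_one (n : ℕ) : ‖(moebius n : ℂ)‖ ≤ 1 := by
  have h := abs_moebius_le_one (n := n)
  have : ‖(moebius n : ℂ)‖ = |(moebius n : ℝ)| := by
    rw [show ((moebius n : ℤ) : ℂ) = ((moebius n : ℝ) : ℂ) by push_cast; ring, Complex.norm_real, Real.norm_eq_abs]
  rw [this]
  rw [show |(moebius n : ℝ)| = ((|moebius n| : ℤ) : ℝ) by push_cast; ring]
  exact_mod_cast h

lemma norm_mfun_le (t : ℝ) : ‖mfun t‖ ≤ (⌊t⌋₊ : ℝ) := by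
  calc ‖mfun t‖ ≤ ∑ n ∈ Finset.Icc 1 ⌊t⌋₊, ‖(moebius n : ℂ)‖ := norm_sum_le _ _
  _ ≤ ∑ n ∈ Finset.Icc 1 ⌊t⌋₊, 1 := Finset.sum_le_sum fun n _ => norm_moebius_le_one n
  _ ≤ (⌊t⌋₊ : ℝ) := by simp

lemma mfun_locInt : LocallyIntegrableOn mfun (Set.Ioi 0) := by
  refine LocallyIntegrable.locallyIntegrableOn ?_ _
  intro x
  refine ⟨Set.Icc (x - 1) (x + 1), Icc_mem_nhds (by linarith) (by linarith), ?_⟩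
  refine Measure.integrableOn_of_bounded (M := (⌊x + 1⌋₊ : ℝ)) (by simp)
    mfun_measurable.aestronglyMeasurable ?_
  rw [ae_restrict_iff' measurableSet_Icc]
  refine ae_of_all _ fun t ht => (norm_mfun_le t).trans ?_
  exact_mod_cast Nat.floor_mono ht.2


lemma mfun_eventually_zero : ∀ᶠ x in nhdsWithin 0 (Set.Ioi 0), mfun x = 0 := by
  filter_upwards [Ioo_mem_nhdsGT_of_mem (by norm_num : (0:ℝ) ∈ Set.Ico 0 1)] with x hx
  have : ⌊x⌋₊ = 0 := Nat.floor_eq_zero.mpr hx.2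
  simp [mfun, this]

lemma mfun_isBigO_bot (c : ℝ) : mfun =O[nhdsWithin 0 (Set.Ioi 0)] (fun x : ℝ => x ^ c) := by
  have h : mfun =ᶠ[nhdsWithin 0 (Set.Ioi 0)] (fun _ => (0:ℂ)) := mfun_eventually_zero
  exact h.trans_isBigO (Asymptotics.isBigO_zero _ _)

lemma mfun_isBigO_top {ε C : ℝ} (hC : ∀ x : ℝ, 1 ≤ x → ‖mfun x‖ ≤ C * x ^ ((1:ℝ)/2 + ε)) :
    mfun =O[atTop] (fun x : ℝ => x ^ ((1:ℝ)/2 + ε)) := by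
  refine Asymptotics.IsBigO.of_bound C ?_
  filter_upwards [eventually_ge_atTop 1] with x hx
  have h0 : (0:ℝ) ≤ x ^ ((1:ℝ)/2 + ε) := Real.rpow_nonneg (by linarith) _
  have : ‖x ^ ((1:ℝ)/2 + ε)‖ = x ^ ((1:ℝ)/2 + ε) := by
    rw [Real.norm_eq_abs, _root_.abs_of_nonneg h0]
  rw [this]; exact hC x hx

lemma mellin_diffAt {s : ℂ}
    (H : ∀ ε : ℝ, 0 < ε → ∃ C : ℝ, ∀ x : ℝ, 1 ≤ x → ‖mfun x‖ ≤ C * x ^ ((1:ℝ)/2 + ε))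
    (hs : 1/2 < s.re) : DifferentiableAt ℂ (mellin mfun) (-s) := by
  set ε : ℝ := (s.re - 1/2)/2 with hε
  obtain ⟨C, hC⟩ := H ε (by rw [hε]; linarith)
  refine mellin_differentiableAt_of_isBigO_rpow (a := -((1:ℝ)/2 + ε)) (b := -(s.re + 1))
    mfun_locInt ?_ ?_ (mfun_isBigO_bot _) ?_
  · simpa only [neg_neg] using mfun_isBigO_top hC
  · simp only [Complex.neg_re]
    rw [hε]; linarith
  · simp only [Complex.neg_re]; linarith

lemma mellin_eq (s : ℂ) :
    mellin mfun (-s) = ∫ t in Set.Ioi (1:ℝ), (t:ℂ) ^ (-s-1) * mfun t := by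
  have hne : ∀ᵐ (t : ℝ), t ≠ 1 := by
    refine ae_iff.mpr ?_
    simp only [ne_eq, not_not, setOf_eq_eq_singleton]
    exact Real.volume_singleton
  have h1 : ∀ᵐ t : ℝ, t ∈ Set.Ioi (0:ℝ) →
      (t:ℂ) ^ (-s-1) • mfun t
        = Set.indicator (Set.Ioi 1) (fun t : ℝ => (t:ℂ) ^ (-s-1) * mfun t) t := by
    filter_upwards [hne] with t ht1 ht
    rcases lt_or_gt_of_ne ht1 with h | h
    · have : ⌊t⌋₊ = 0 := Nat.floor_eq_zero.mpr h
      rw [Set.indicator_of_notMem (by simpa using h.le.not_gt)]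
      simp [mfun, this]
    · rw [Set.indicator_of_mem (show t ∈ Set.Ioi 1 from h), smul_eq_mul]
  calc mellin mfun (-s) = ∫ t in Set.Ioi (0:ℝ),
        Set.indicator (Set.Ioi 1) (fun t : ℝ => (t:ℂ) ^ (-s-1) * mfun t) t := by
        rw [mellin]
        exact setIntegral_congr_ae measurableSet_Ioi (by simpa using h1)
    _ = ∫ t in Set.Ioi (0:ℝ) ∩ Set.Ioi 1, (t:ℂ) ^ (-s-1) * mfun t :=
        setIntegral_indicator measurableSet_Ioi
    _ = ∫ t in Set.Ioi (1:ℝ), (t:ℂ) ^ (-s-1) * mfun t := by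
        rw [Set.Ioi_inter_Ioi, max_eq_right (by norm_num : (0:ℝ) ≤ 1)]

lemma integrableOn_integrand {s : ℂ} (hs : 1/2 < s.re)
    (H : ∀ ε : ℝ, 0 < ε → ∃ C : ℝ, ∀ x : ℝ, 1 ≤ x → ‖mfun x‖ ≤ C * x ^ ((1:ℝ)/2 + ε)) :
    IntegrableOn (fun t : ℝ => (t:ℂ) ^ (-s-1) * mfun t) (Set.Ioi 1) := by
  set ε : ℝ := (s.re - 1/2)/2 with hε
  have hεpos : 0 < ε := by rw [hε]; linarith
  obtain ⟨C, hC⟩ := H ε hεpos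
  set p : ℝ := (1:ℝ)/2 + ε - s.re - 1 with hp
  have hplt : p < -1 := by rw [hp, hε]; linarith
  have hint : IntegrableOn (fun t : ℝ => |C| * t ^ p) (Set.Ioi 1) :=
    (integrableOn_Ioi_rpow_of_lt hplt one_pos).const_mul _
  refine hint.integrable.mono' ?_ ?_
  · have c1 : ContinuousOn (fun t : ℝ => (t:ℂ) ^ (-s-1)) (Set.Ioi 1) := by
      refine ContinuousOn.cpow_const Complex.continuous_ofReal.continuousOn fun t ht => ?_
      exact Or.inl (by simpa using lt_trans one_pos ht)
    exact (c1.aestronglyMeasurable measurableSet_Ioi).mul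
      (mfun_measurable.aestronglyMeasurable.restrict)
  · rw [ae_restrict_iff' measurableSet_Ioi]
    refine ae_of_all _ fun t ht => ?_
    have ht0 : (0:ℝ) < t := lt_trans one_pos ht
    have hnorm : ‖(t:ℂ) ^ (-s-1)‖ = t ^ (-s.re - 1) := by
      rw [Complex.norm_cpow_eq_rpow_re_of_pos ht0]
      norm_num
    calc ‖(t:ℂ) ^ (-s-1) * mfun t‖ = t ^ (-s.re - 1) * ‖mfun t‖ := by
          rw [norm_mul, hnorm]
      _ ≤ t ^ (-s.re - 1) * (C * t ^ ((1:ℝ)/2 + ε)) := by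
          exact mul_le_mul_of_nonneg_left (hC t (le_of_lt ht)) (Real.rpow_nonneg ht0.le _)
      _ ≤ t ^ (-s.re - 1) * (|C| * t ^ ((1:ℝ)/2 + ε)) := by
          have h1 := Real.rpow_nonneg ht0.le ((1:ℝ)/2 + ε)
          have h2 := Real.rpow_nonneg ht0.le (-s.re - 1)
          nlinarith [le_abs_self C, mul_le_mul_of_nonneg_right (le_abs_self C) h1]
      _ = |C| * t ^ p := by
          have key : t ^ (-s.re - 1) * t ^ ((1:ℝ)/2 + ε) = t ^ p := by
            rw [← Real.rpow_add ht0]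
            congr 1
            rw [hp]; ring
          rw [← key]; ring

lemma hasDerivAt_cpow_neg {s : ℂ} (hs : s ≠ 0) {t : ℝ} (ht : 0 < t) :
    HasDerivAt (fun y : ℝ => (y:ℂ) ^ (-s)) (-s * (t:ℂ) ^ (-s-1)) t := by
  have hr : -s - 1 ≠ -1 := by
    intro hcon
    apply hs
    have := congrArg (· + 1) hcon
    simpa using this
  have h := hasDerivAt_ofReal_cpow_const' (ne_of_gt ht) hr
  have e : -s - 1 + 1 = -s := by ring
  rw [e] at h
  have h2 := h.const_mul (-s)
  have hns : -s ≠ 0 := neg_ne_zero.mpr hs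
  have heq : (fun y : ℝ => -s * ((y:ℂ) ^ (-s) / (-s))) = fun y : ℝ => (y:ℂ) ^ (-s) :=
    funext fun y => by rw [mul_comm, div_mul_cancel₀ _ hns]
  rwa [heq] at h2


lemma lseries_eq_integral {s : ℂ} (hs : 1 < s.re)
    (H : ∀ ε : ℝ, 0 < ε → ∃ C : ℝ, ∀ x : ℝ, 1 ≤ x → ‖mfun x‖ ≤ C * x ^ ((1:ℝ)/2 + ε)) :
    LSeries (fun n : ℕ => (moebius n : ℂ)) s
      = s * ∫ t in Set.Ioi (1:ℝ), (t:ℂ) ^ (-s-1) * mfun t := by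
  have hs0 : s ≠ 0 := by
    intro h; rw [h, Complex.zero_re] at hs; norm_num at hs
  have hsum : LSeriesSummable (fun n : ℕ => (moebius n : ℂ)) s :=
    LSeriesSummable_moebius_iff.mpr hs
  -- Abel summation identity for each `n ≥ 1`
  have habel : ∀ n : ℕ, 1 ≤ n →
      ∑ k ∈ Finset.range (n+1), LSeries.term (fun m : ℕ => (moebius m : ℂ)) s k
        = ((n:ℝ):ℂ) ^ (-s) * mfun n
          - ∫ t in Set.Ioc (1:ℝ) (n:ℝ), (-s * (t:ℂ) ^ (-s-1)) * mfun t := by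
    intro n hn
    have hdiff : ∀ t ∈ Set.Icc (1:ℝ) (n:ℝ), DifferentiableAt ℝ (fun y : ℝ => (y:ℂ) ^ (-s)) t :=
      fun t ht => (hasDerivAt_cpow_neg hs0 (lt_of_lt_of_le zero_lt_one ht.1)).differentiableAt
    have hint : IntegrableOn (deriv fun y : ℝ => (y:ℂ) ^ (-s)) (Set.Icc 1 (n:ℝ)) := by
      have hcont : ContinuousOn (fun t : ℝ => -s * (t:ℂ) ^ (-s-1)) (Set.Icc 1 (n:ℝ)) := by
        refine continuousOn_const.mul (ContinuousOn.cpow_const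
          Complex.continuous_ofReal.continuousOn fun t ht => Or.inl ?_)
        simpa using lt_of_lt_of_le zero_lt_one ht.1
      refine (hcont.integrableOn_Icc).congr_fun (fun t ht => ?_) measurableSet_Icc
      exact ((hasDerivAt_cpow_neg hs0 (lt_of_lt_of_le zero_lt_one ht.1)).deriv).symm
    have key := sum_mul_eq_sub_integral_mul₀ (fun k : ℕ => (moebius k : ℂ))
      (by simp) (n:ℝ) hdiff hint
    simp only [sum_eq_mfun] at key
    rw [Nat.floor_natCast] at key
    have hrange : Finset.range (n+1) = Finset.Icc 0 n := by
      ext k; simp [Nat.lt_succ_iff]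
    have hterm : ∀ k ∈ Finset.Icc 0 n,
        LSeries.term (fun m : ℕ => (moebius m : ℂ)) s k
          = ((k:ℝ):ℂ) ^ (-s) * ((moebius k : ℤ) : ℂ) := by
      intro k _
      rcases eq_or_ne k 0 with rfl | hk
      · simp
      · rw [LSeries.term_of_ne_zero hk]
        rw [show ((k:ℝ):ℂ) = (k:ℂ) by push_cast; ring, cpow_neg, div_eq_mul_inv, mul_comm]
    rw [hrange, Finset.sum_congr rfl hterm]
    have hIeq : (∫ t in Set.Ioc (1:ℝ) (n:ℝ), deriv (fun y : ℝ => (y:ℂ) ^ (-s)) t * mfun t)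
        = ∫ t in Set.Ioc (1:ℝ) (n:ℝ), (-s * (t:ℂ) ^ (-s-1)) * mfun t := by
      refine setIntegral_congr_fun measurableSet_Ioc (fun t ht => ?_)
      rw [(hasDerivAt_cpow_neg hs0 (lt_trans zero_lt_one ht.1)).deriv]
    rw [← hIeq]
    exact key
  -- limit of the boundary term
  obtain ⟨C, hC⟩ := H (1/4) (by norm_num)
  have hδ : (0:ℝ) < s.re - ((1:ℝ)/2 + 1/4) := by linarith
  have T2 : Tendsto (fun n : ℕ => ((n:ℝ):ℂ) ^ (-s) * mfun n) atTop (nhds 0) := by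
    have hbd : ∀ᶠ n : ℕ in atTop, ‖((n:ℝ):ℂ) ^ (-s) * mfun n‖
        ≤ C * (n:ℝ) ^ (-(s.re - ((1:ℝ)/2 + 1/4))) := by
      filter_upwards [eventually_ge_atTop 1] with n hn
      have hn' : (1:ℝ) ≤ (n:ℝ) := by exact_mod_cast hn
      have h0 : (0:ℝ) < (n:ℝ) := lt_of_lt_of_le zero_lt_one hn'
      have hnorm : ‖((n:ℝ):ℂ) ^ (-s)‖ = (n:ℝ) ^ (-s.re) := by
        rw [Complex.norm_cpow_eq_rpow_re_of_pos h0, Complex.neg_re]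
      calc ‖((n:ℝ):ℂ) ^ (-s) * mfun n‖ = (n:ℝ) ^ (-s.re) * ‖mfun n‖ := by
            rw [norm_mul, hnorm]
        _ ≤ (n:ℝ) ^ (-s.re) * (C * (n:ℝ) ^ ((1:ℝ)/2 + 1/4)) :=
            mul_le_mul_of_nonneg_left (hC _ hn') (Real.rpow_nonneg h0.le _)
        _ = C * (n:ℝ) ^ (-(s.re - ((1:ℝ)/2 + 1/4))) := by
            have : (n:ℝ) ^ (-s.re) * (n:ℝ) ^ ((1:ℝ)/2 + 1/4)
                = (n:ℝ) ^ (-(s.re - ((1:ℝ)/2 + 1/4))) := by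
              rw [← Real.rpow_add h0]; congr 1; ring
            rw [← this]; ring
    refine squeeze_zero_norm' hbd ?_
    have := (tendsto_rpow_neg_atTop hδ).comp tendsto_natCast_atTop_atTop
    simpa using this.const_mul C
  -- limit of the integral term
  have hU : (⋃ n : ℕ, Set.Ioc (1:ℝ) (n:ℝ)) = Set.Ioi 1 := by
    ext x
    simp only [Set.mem_iUnion, Set.mem_Ioc, Set.mem_Ioi]
    constructor
    · rintro ⟨n, h1, _⟩; exact h1
    · intro hx; obtain ⟨n, hn⟩ := exists_nat_ge x; exact ⟨n, hx, hn⟩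
  have hmono : Monotone (fun n : ℕ => Set.Ioc (1:ℝ) (n:ℝ)) :=
    fun a b hab => Set.Ioc_subset_Ioc_right (by exact_mod_cast hab)
  have hintegr : IntegrableOn (fun t : ℝ => (-s * (t:ℂ) ^ (-s-1)) * mfun t)
      (⋃ n : ℕ, Set.Ioc (1:ℝ) (n:ℝ)) := by
    rw [hU]
    have := (integrableOn_integrand (s := s) (by linarith) H).const_mul (-s)
    simpa [mul_assoc, IntegrableOn] using this
  have T3 := tendsto_setIntegral_of_monotone (fun n : ℕ => measurableSet_Ioc) hmono hintegr
  rw [hU] at T3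
  -- conclusion
  have Tsum : Tendsto
      (fun n : ℕ => ∑ k ∈ Finset.range (n+1), LSeries.term (fun m : ℕ => (moebius m : ℂ)) s k)
      atTop (nhds (LSeries (fun n : ℕ => (moebius n : ℂ)) s)) :=
    hsum.hasSum.tendsto_sum_nat.comp (tendsto_add_atTop_nat 1)
  have Talt := T2.sub T3
  have hmain : LSeries (fun n : ℕ => (moebius n : ℂ)) s
      = 0 - ∫ t in Set.Ioi (1:ℝ), (-s * (t:ℂ) ^ (-s-1)) * mfun t := by
    refine tendsto_nhds_unique (Tsum.congr' ?_) Talt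
    filter_upwards [eventually_ge_atTop 1] with n hn using habel n hn
  rw [hmain]
  have : (∫ t in Set.Ioi (1:ℝ), (-s * (t:ℂ) ^ (-s-1)) * mfun t)
      = -s * ∫ t in Set.Ioi (1:ℝ), (t:ℂ) ^ (-s-1) * mfun t := by
    rw [← MeasureTheory.integral_const_mul]
    congr 1; funext t; ring
  rw [this]; ring


noncomputable def Fm : ℂ → ℂ := fun z => z * mellin mfun (-z)

lemma Fm_diff
    (H : ∀ ε : ℝ, 0 < ε → ∃ C : ℝ, ∀ x : ℝ, 1 ≤ x → ‖mfun x‖ ≤ C * x ^ ((1:ℝ)/2 + ε))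
    {z : ℂ} (hz : 1/2 < z.re) : DifferentiableAt ℂ Fm z := by
  have h1 : DifferentiableAt ℂ (fun w : ℂ => mellin mfun (-w)) z :=
    (mellin_diffAt H hz).comp z differentiableAt_id.neg
  exact differentiableAt_id.mul h1

lemma zeta_mul_Fm
    (H : ∀ ε : ℝ, 0 < ε → ∃ C : ℝ, ∀ x : ℝ, 1 ≤ x → ‖mfun x‖ ≤ C * x ^ ((1:ℝ)/2 + ε))
    {z : ℂ} (hz : 1 < z.re) : riemannZeta z * Fm z = 1 := by
  have hFm : Fm z = LSeries (fun n : ℕ => (moebius n : ℂ)) z := by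
    rw [lseries_eq_integral hz H, ← mellin_eq]
    rfl
  rw [hFm, ← LSeries_zeta_eq_riemannZeta hz]
  exact LSeries_zeta_mul_Lseries_moebius hz

lemma zeta_ne_zero
    (H : ∀ ε : ℝ, 0 < ε → ∃ C : ℝ, ∀ x : ℝ, 1 ≤ x → ‖mfun x‖ ≤ C * x ^ ((1:ℝ)/2 + ε))
    {z : ℂ} (hz : 1/2 < z.re) (hz1 : z ≠ 1) : riemannZeta z ≠ 0 := by
  set U : Set ℂ := {w : ℂ | 1/2 < w.re} with hUdef
  have hUopen : IsOpen U := isOpen_lt continuous_const Complex.continuous_re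
  set G : ℂ → ℂ := Function.update (fun w => (w - 1) * riemannZeta w * Fm w) 1 (Fm 1) with hG
  have hGdiff : ∀ w ∈ U, w ≠ 1 → DifferentiableAt ℂ G w := by
    intro w hw hw1
    have hd : DifferentiableAt ℂ (fun w => (w - 1) * riemannZeta w * Fm w) w :=
      ((differentiableAt_id.sub_const 1).mul (differentiableAt_riemannZeta hw1)).mul
        (Fm_diff H hw)
    refine hd.congr_of_eventuallyEq ?_
    filter_upwards [eventually_ne_nhds hw1] with v hv
    rw [hG]
    exact Function.update_of_ne hv _ _
  have hone : (1:ℂ) ∈ U := by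
    simp only [hUdef, Set.mem_setOf_eq, Complex.one_re]; norm_num
  have hGanalytic : DifferentiableOn ℂ G U := by
    intro w hw
    rcases eq_or_ne w 1 with rfl | hw1
    · refine (Complex.analyticAt_of_differentiable_on_punctured_nhds_of_continuousAt ?_
        ?_).differentiableAt.differentiableWithinAt
      · have hU1 : U ∈ nhds (1:ℂ) := hUopen.mem_nhds hw
        filter_upwards [self_mem_nhdsWithin, mem_nhdsWithin_of_mem_nhds hU1] with v hv1 hvU
        exact hGdiff v hvU hv1
      · rw [ContinuousAt, ← nhdsNE_sup_pure (1:ℂ), Filter.tendsto_sup]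
        constructor
        · have h2 : Tendsto Fm (nhdsWithin 1 {(1:ℂ)}ᶜ) (nhds (Fm 1)) :=
            ((Fm_diff H (by rw [Complex.one_re]; norm_num)).continuousAt).continuousWithinAt
          have hmul := riemannZeta_residue_one.mul h2
          rw [one_mul] at hmul
          have hGval : G 1 = Fm 1 := Function.update_self _ _ _
          rw [hGval]
          refine Filter.Tendsto.congr' ?_ hmul
          filter_upwards [self_mem_nhdsWithin] with v hv
          rw [hG]
          exact (Function.update_of_ne hv (Fm 1)
            (fun w => (w - 1) * riemannZeta w * Fm w)).symm
        · exact tendsto_pure_nhds G 1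
    · exact (hGdiff w hw hw1).differentiableWithinAt
  have hpre : IsPreconnected U := (convex_halfSpace_re_gt (1/2)).isPreconnected
  have h2U : (2:ℂ) ∈ U := by
    simp only [hUdef, Set.mem_setOf_eq]
    norm_num
  have heq : Set.EqOn G (fun w => w - 1) U := by
    refine (hGanalytic.analyticOnNhd hUopen).eqOn_of_preconnected_of_eventuallyEq
      ((differentiable_id.sub_const 1).differentiableOn.analyticOnNhd hUopen) hpre h2U ?_
    have hopen1 : IsOpen {w : ℂ | 1 < w.re} := isOpen_lt continuous_const Complex.continuous_re
    have h2mem : (2:ℂ) ∈ {w : ℂ | 1 < w.re} := by norm_num [Set.mem_setOf_eq]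
    filter_upwards [hopen1.mem_nhds h2mem] with v hv
    have hv' : 1 < v.re := hv
    have hv1 : v ≠ 1 := by
      intro h; rw [h, Complex.one_re] at hv'; norm_num at hv'
    rw [hG]
    rw [Function.update_of_ne hv1]
    calc (v - 1) * riemannZeta v * Fm v = (v - 1) * (riemannZeta v * Fm v) := by ring
      _ = v - 1 := by rw [zeta_mul_Fm H hv', mul_one]
  intro h0
  have hzU : z ∈ U := hz
  have hval := heq hzU
  rw [hG, Function.update_of_ne hz1, h0] at hval
  simp only [mul_zero, zero_mul] at hval
  exact hz1 (by linear_combination -hval)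

end MertensRH

theorem mertens_bound_implies_RH
    (h : ∀ ε : ℝ, 0 < ε → ∃ C : ℝ, ∀ x : ℝ, 1 ≤ x →
      |∑ n ∈ Finset.Icc 1 ⌊x⌋₊, (ArithmeticFunction.moebius n : ℝ)| ≤
        C * x ^ ((1 : ℝ) / 2 + ε)) :
    RiemannHypothesis := by
  have H : ∀ ε : ℝ, 0 < ε → ∃ C : ℝ, ∀ x : ℝ, 1 ≤ x →
      ‖MertensRH.mfun x‖ ≤ C * x ^ ((1:ℝ)/2 + ε) := by
    intro ε hε
    obtain ⟨C, hC⟩ := h ε hε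
    refine ⟨C, fun x hx => ?_⟩
    have hcast : MertensRH.mfun x
        = (((∑ n ∈ Finset.Icc 1 ⌊x⌋₊, (moebius n : ℝ)) : ℝ) : ℂ) := by
      rw [MertensRH.mfun]; push_cast; ring
    rw [hcast, Complex.norm_real, Real.norm_eq_abs]
    exact hC x hx
  intro z hzero htriv hz1
  by_contra hre
  rcases lt_trichotomy z.re (1/2) with hlt | heq | hgt
  · -- `re z < 1/2`: use the functional equation
    have hz0 : z ≠ 0 := by
      intro hcon; rw [hcon, riemannZeta_zero] at hzero; norm_num at hzero
    set s : ℂ := 1 - z with hsdef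
    have hsre : 1/2 < s.re := by
      rw [hsdef, Complex.sub_re, Complex.one_re]; linarith
    have hs1 : s ≠ 1 := by
      rw [hsdef]; intro hcon
      apply hz0
      have := congrArg (fun w => 1 - w) hcon
      simpa using this
    have hsn : ∀ n : ℕ, s ≠ -n := by
      intro n hcon
      have hn : s.re = -(n:ℝ) := by rw [hcon]; simp
      rw [hn] at hsre
      have : (0:ℝ) ≤ n := Nat.cast_nonneg n
      linarith
    have hzs : (1:ℂ) - s = z := by rw [hsdef]; ring
    have feq := riemannZeta_one_sub hsn hs1
    rw [hzs, hzero] at feq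
    have hpow : (2 * (Real.pi:ℂ)) ^ (-s) ≠ 0 := by
      intro hcon
      rcases (Complex.cpow_eq_zero_iff _ _).mp hcon with ⟨hb, _⟩
      exact (mul_ne_zero two_ne_zero (Complex.ofReal_ne_zero.mpr Real.pi_ne_zero)) hb
    have hGamma : Complex.Gamma s ≠ 0 := Complex.Gamma_ne_zero hsn
    have hzs' : riemannZeta s ≠ 0 := MertensRH.zeta_ne_zero H hsre hs1
    have hcos : Complex.cos ((Real.pi:ℂ) * s / 2) = 0 := by
      by_contra hcon
      exact (mul_ne_zero (mul_ne_zero (mul_ne_zero (mul_ne_zero two_ne_zero hpow) hGamma)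
        hcon) hzs') feq.symm
    obtain ⟨k, hk⟩ := Complex.cos_eq_zero_iff.mp hcos
    have hπ : (Real.pi:ℂ) ≠ 0 := Complex.ofReal_ne_zero.mpr Real.pi_ne_zero
    have hmul : (Real.pi:ℂ) * s = (Real.pi:ℂ) * (2 * (k:ℂ) + 1) := by
      linear_combination 2 * hk
    have hseq : s = 2 * (k:ℂ) + 1 := mul_left_cancel₀ hπ hmul
    have hre2 : s.re = 2 * (k:ℝ) + 1 := by rw [hseq]; simp
    have hk0 : (0:ℤ) ≤ k := by
      have h' : (-1:ℝ) < (k:ℝ) := by rw [hre2] at hsre; linarith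
      have : (-1:ℤ) < k := by exact_mod_cast h'
      omega
    have hkne : k ≠ 0 := by
      intro hcon; apply hs1; rw [hseq, hcon]; simp
    have hk1 : (1:ℤ) ≤ k := by omega
    have hz2 : z = -2 * (k:ℂ) := by rw [← hzs, hseq]; ring
    refine htriv ⟨(k - 1).toNat, ?_⟩
    have hcast : (((k - 1).toNat : ℕ) : ℂ) = (k:ℂ) - 1 := by
      have h1 : ((k - 1).toNat : ℤ) = k - 1 := Int.toNat_of_nonneg (by omega)
      have h2 := congrArg (fun m : ℤ => (m : ℂ)) h1
      push_cast at h2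
      linear_combination h2
    rw [hz2, hcast]
    ring
  · exact hre heq
  · exact MertensRH.zeta_ne_zero H hgt hz1 hzero
end

section
/- For a multiplicative function u bounded by 1, if the mean M(χ · u) = lim_{N→∞} (1/N) ∑_{n ≤ N} χ(n) u(n) exists and equals 0 for every Dirichlet character χ of every modulus, then u is aperiodic: for all a, r ∈ ℕ, (1/N) ∑_{n ≤ N} u(an + r) → 0. -/
open Filter Finset



private lemma dvd_pow_self_of_primes (a : ℕ) :
    ∀ v : ℕ, 0 < v → (∀ p, p.Prime → p ∣ v → p ∣ a) → v ∣ a ^ v := by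
  intro v
  induction v using Nat.strong_induction_on with
  | _ v IH =>
    intro hv hp
    rcases eq_or_lt_of_le (show 1 ≤ v from hv) with h1 | h2
    · simp [← h1]
    · set p := v.minFac with hpdef
      have hpp : p.Prime := Nat.minFac_prime (by omega)
      have hpd : p ∣ v := Nat.minFac_dvd v
      have hlt : v / p < v := Nat.div_lt_self hv hpp.one_lt
      have hpos : 0 < v / p := Nat.div_pos (Nat.minFac_le hv) hpp.pos
      have IH' : v / p ∣ a ^ (v / p) :=
        IH _ hlt hpos (fun q hq hqd => hp q hq (hqd.trans (Nat.div_dvd_of_dvd hpd)))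
      have hv' : v = v / p * p := (Nat.div_mul_cancel hpd).symm
      calc v = v / p * p := hv'
        _ ∣ a ^ (v / p) * a ^ 1 := mul_dvd_mul IH' (by simpa using hp p hpp hpd)
        _ = a ^ (v / p + 1) := (pow_add a _ 1).symm
        _ ∣ a ^ v := pow_dvd_pow a (by omega)

private lemma sm_primes {a v p : ℕ} (h : v ∣ a ^ v) (pp : p.Prime) (pd : p ∣ v) : p ∣ a :=
  pp.dvd_of_dvd_pow (pd.trans h)

private lemma sm_mul_prime {a v p : ℕ} (hv0 : 0 < v) (h : v ∣ a ^ v) (pp : p.Prime)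
    (pa : p ∣ a) : v * p ∣ a ^ (v * p) := by
  refine dvd_pow_self_of_primes a _ (Nat.mul_pos hv0 pp.pos) (fun q hq hqd => ?_)
  rcases (Nat.Prime.dvd_mul hq).mp hqd with h' | h'
  · exact sm_primes h hq h'
  · exact (Nat.prime_dvd_prime_iff_eq hq pp).mp h' ▸ pa

private lemma spart_dvd (a m : ℕ) : m.gcd (a ^ m) ∣ m := Nat.gcd_dvd_left m _

private lemma spart_pos {m : ℕ} (a : ℕ) (hm : 0 < m) : 0 < m.gcd (a ^ m) :=
  Nat.gcd_pos_of_pos_left _ hm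

private lemma spart_sm {a m : ℕ} (hm : 0 < m) :
    m.gcd (a ^ m) ∣ a ^ m.gcd (a ^ m) := by
  refine dvd_pow_self_of_primes a _ (spart_pos a hm) (fun p pp pd => ?_)
  exact pp.dvd_of_dvd_pow (pd.trans (Nat.gcd_dvd_right m (a ^ m)))

private lemma spart_mul_div {a m : ℕ} : m.gcd (a ^ m) * (m / m.gcd (a ^ m)) = m :=
  Nat.mul_div_cancel' (spart_dvd a m)

private lemma coprime_div_spart {a m : ℕ} (ha : 0 < a) (hm : 0 < m) :
    Nat.Coprime (m / m.gcd (a ^ m)) a := by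
  by_contra h
  set g := Nat.gcd (m / m.gcd (a ^ m)) a with hg
  have hg1 : g ≠ 1 := h
  have hgpos : 0 < g := Nat.gcd_pos_of_pos_right _ ha
  set p := g.minFac with hp
  have hpp : p.Prime := Nat.minFac_prime hg1
  have hpd1 : p ∣ m / m.gcd (a ^ m) := (Nat.minFac_dvd g).trans (Nat.gcd_dvd_left _ _)
  have hpa : p ∣ a := (Nat.minFac_dvd g).trans (Nat.gcd_dvd_right _ _)
  obtain ⟨t, ht⟩ := hpd1
  have hmm : m = m.gcd (a ^ m) * p * t := by
    rw [mul_assoc, ← ht, spart_mul_div]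
  have hdvd_m : m.gcd (a ^ m) * p ∣ m := ⟨t, hmm⟩
  have h1 : m.gcd (a ^ m) * p ∣ a ^ (m.gcd (a ^ m) * p) :=
    sm_mul_prime (spart_pos a hm) (spart_sm hm) hpp hpa
  have h2 : m.gcd (a ^ m) * p ∣ a ^ m :=
    h1.trans (pow_dvd_pow a (Nat.le_of_dvd hm hdvd_m))
  have h3 : m.gcd (a ^ m) * p ∣ m.gcd (a ^ m) := Nat.dvd_gcd hdvd_m h2
  have h4 := Nat.le_of_dvd (spart_pos a hm) h3
  have h5 : m.gcd (a ^ m) * 2 ≤ m.gcd (a ^ m) * p :=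
    Nat.mul_le_mul_left _ hpp.two_le
  have := spart_pos a hm
  omega

private lemma spart_mul {a v w : ℕ} (hv0 : 0 < v) (hv : v ∣ a ^ v)
    (hw : Nat.Coprime w a) (hw0 : 0 < w) : (v * w).gcd (a ^ (v * w)) = v := by
  have hcop : Nat.Coprime w (a ^ (v * w)) := hw.pow_right _
  rw [Nat.Coprime.gcd_mul_right_cancel v hcop]
  exact Nat.gcd_eq_left (hv.trans (pow_dvd_pow a (Nat.le_mul_of_pos_right v hw0)))

private lemma coprime_of_sm {a v w : ℕ} (hv : v ∣ a ^ v) (hw : Nat.Coprime w a) :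
    Nat.Coprime v w :=
  (Nat.Coprime.coprime_dvd_right hv (hw.pow_right v)).symm


private lemma char_limit (u : ℕ → ℂ) {a : ℕ} (ha : 0 < a)
    (hχa : ∀ χ : DirichletCharacter ℂ a,
      Tendsto (fun N : ℕ => (N : ℂ)⁻¹ * ∑ n ∈ Finset.Icc 1 N, χ (n : ZMod a) * u n)
        atTop (nhds 0)) (r v : ℕ) :
    Tendsto (fun X : ℕ => (X : ℂ)⁻¹ *
      ∑ w ∈ (Icc 1 X).filter
        (fun w => Nat.Coprime w a ∧ (v : ZMod a) * (w : ZMod a) = (r : ZMod a)), u w)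
      atTop (nhds 0) := by
  haveI : NeZero a := ⟨ha.ne'⟩
  set R : Finset (ZMod a)ˣ :=
    univ.filter (fun s => (v : ZMod a) * (s : ZMod a) = (r : ZMod a)) with hR
  have hφ : ((a.totient : ℂ)) ≠ 0 := Nat.cast_ne_zero.mpr (Nat.totient_pos.mpr ha).ne'
  have key : ∀ w : ℕ,
      (if Nat.Coprime w a ∧ (v : ZMod a) * (w : ZMod a) = (r : ZMod a) then (1:ℂ) else 0)
      = (a.totient : ℂ)⁻¹ * ∑ s ∈ R, ∑ χ : DirichletCharacter ℂ a,
          χ ((s : ZMod a)⁻¹) * χ (w : ZMod a) := by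
    intro w
    have horth : ∀ s : (ZMod a)ˣ,
        ∑ χ : DirichletCharacter ℂ a, χ ((s : ZMod a)⁻¹) * χ (w : ZMod a)
        = if (s : ZMod a) = (w : ZMod a) then (a.totient : ℂ) else 0 :=
      fun s => DirichletCharacter.sum_char_inv_mul_char_eq ℂ s.isUnit _
    rw [Finset.sum_congr rfl (fun s _ => horth s)]
    by_cases h : Nat.Coprime w a ∧ (v : ZMod a) * (w : ZMod a) = (r : ZMod a)
    · rw [if_pos h]
      set s₀ : (ZMod a)ˣ := ZMod.unitOfCoprime w h.1 with hs₀
      have hs₀v : (s₀ : ZMod a) = (w : ZMod a) := ZMod.coe_unitOfCoprime w h.1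
      have hs₀R : s₀ ∈ R := by
        simp only [hR, mem_filter, mem_univ, true_and, hs₀v]
        exact h.2
      rw [Finset.sum_eq_single s₀ (fun s hs hne => ?_) (fun h' => absurd hs₀R h')]
      · rw [if_pos hs₀v, inv_mul_cancel₀ hφ]
      · rw [if_neg]
        intro hh
        exact hne (Units.ext (by rw [hh, hs₀v]))
    · rw [if_neg h, Finset.sum_eq_zero, mul_zero]
      intro s hs
      rw [if_neg]
      intro hh
      refine h ⟨?_, ?_⟩
      · exact (ZMod.isUnit_iff_coprime w a).mp (hh ▸ s.isUnit)
      · rw [← hh]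
        simpa only [hR, mem_filter, mem_univ, true_and] using hs
  have hid : ∀ X : ℕ,
      ∑ w ∈ (Icc 1 X).filter
        (fun w => Nat.Coprime w a ∧ (v : ZMod a) * (w : ZMod a) = (r : ZMod a)), u w
      = (a.totient : ℂ)⁻¹ * ∑ s ∈ R, ∑ χ : DirichletCharacter ℂ a,
          χ ((s : ZMod a)⁻¹) * ∑ n ∈ Icc 1 X, χ (n : ZMod a) * u n := by
    intro X
    rw [Finset.sum_filter]
    have step1 : ∀ w ∈ Icc 1 X,
        (if Nat.Coprime w a ∧ (v : ZMod a) * (w : ZMod a) = (r : ZMod a) then u w else 0)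
        = ((a.totient : ℂ)⁻¹ * ∑ s ∈ R, ∑ χ : DirichletCharacter ℂ a,
            χ ((s : ZMod a)⁻¹) * χ (w : ZMod a)) * u w := by
      intro w _
      rw [← key w]
      split_ifs <;> simp
    rw [Finset.sum_congr rfl step1]
    calc ∑ w ∈ Icc 1 X, ((a.totient : ℂ)⁻¹ * ∑ s ∈ R, ∑ χ : DirichletCharacter ℂ a,
            χ ((s : ZMod a)⁻¹) * χ (w : ZMod a)) * u w
        = ∑ w ∈ Icc 1 X, ∑ s ∈ R, ∑ χ : DirichletCharacter ℂ a,
            (a.totient : ℂ)⁻¹ * (χ ((s : ZMod a)⁻¹) * (χ (w : ZMod a) * u w)) := by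
          refine Finset.sum_congr rfl fun w _ => ?_
          simp only [Finset.sum_mul, Finset.mul_sum]
          exact Finset.sum_congr rfl fun s _ => Finset.sum_congr rfl fun χ _ => by ring
      _ = ∑ s ∈ R, ∑ χ : DirichletCharacter ℂ a, ∑ w ∈ Icc 1 X,
            (a.totient : ℂ)⁻¹ * (χ ((s : ZMod a)⁻¹) * (χ (w : ZMod a) * u w)) := by
          rw [Finset.sum_comm]
          exact Finset.sum_congr rfl fun s _ => Finset.sum_comm
      _ = (a.totient : ℂ)⁻¹ * ∑ s ∈ R, ∑ χ : DirichletCharacter ℂ a,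
            χ ((s : ZMod a)⁻¹) * ∑ n ∈ Icc 1 X, χ (n : ZMod a) * u n := by
          simp only [Finset.mul_sum]
  have hfun : (fun X : ℕ => (X : ℂ)⁻¹ *
      ∑ w ∈ (Icc 1 X).filter
        (fun w => Nat.Coprime w a ∧ (v : ZMod a) * (w : ZMod a) = (r : ZMod a)), u w)
      = fun X : ℕ => (a.totient : ℂ)⁻¹ * ∑ s ∈ R, ∑ χ : DirichletCharacter ℂ a,
          χ ((s : ZMod a)⁻¹) * ((X : ℂ)⁻¹ * ∑ n ∈ Icc 1 X, χ (n : ZMod a) * u n) := by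
    funext X
    rw [hid X]
    simp only [Finset.mul_sum]
    exact Finset.sum_congr rfl fun s _ => Finset.sum_congr rfl fun χ _ =>
      Finset.sum_congr rfl fun n _ => by ring
  rw [hfun]
  have hlim : Tendsto (fun X : ℕ => ∑ s ∈ R, ∑ χ : DirichletCharacter ℂ a,
      χ ((s : ZMod a)⁻¹) * ((X : ℂ)⁻¹ * ∑ n ∈ Icc 1 X, χ (n : ZMod a) * u n))
      atTop (nhds 0) := by
    have := tendsto_finset_sum R (fun s (_ : s ∈ R) =>
      tendsto_finset_sum (univ : Finset (DirichletCharacter ℂ a))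
        (fun χ _ => (hχa χ).const_mul (χ ((s : ZMod a)⁻¹))))
    simpa using this
  simpa using hlim.const_mul ((a.totient : ℂ)⁻¹)

private lemma decomp (u : ℕ → ℂ)
    (hmu : ∀ m n : ℕ, Nat.Coprime m n → u (m * n) = u m * u n)
    {a : ℕ} (ha : 0 < a) (r M : ℕ) :
    ∑ m ∈ (Icc 1 M).filter (fun m : ℕ => (m : ZMod a) = (r : ZMod a)), u m
    = ∑ v ∈ (Icc 1 M).filter (fun v => v ∣ a ^ v),
        u v * ∑ w ∈ (Icc 1 (M / v)).filter
          (fun w => Nat.Coprime w a ∧ (v : ZMod a) * (w : ZMod a) = (r : ZMod a)), u w := by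
  have hrw : ∀ v ∈ (Icc 1 M).filter (fun v => v ∣ a ^ v),
      u v * ∑ w ∈ (Icc 1 (M / v)).filter
          (fun w => Nat.Coprime w a ∧ (v : ZMod a) * (w : ZMod a) = (r : ZMod a)), u w
      = ∑ w ∈ (Icc 1 (M / v)).filter
          (fun w => Nat.Coprime w a ∧ (v : ZMod a) * (w : ZMod a) = (r : ZMod a)),
          u v * u w :=
    fun v _ => Finset.mul_sum _ _ _
  rw [Finset.sum_congr rfl hrw, Finset.sum_sigma']
  refine Finset.sum_nbij' (fun m => ⟨m.gcd (a ^ m), m / m.gcd (a ^ m)⟩)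
    (fun x => x.1 * x.2) ?_ ?_ ?_ ?_ ?_
  · intro m hm
    simp only [mem_filter, mem_Icc, mem_sigma] at hm ⊢
    obtain ⟨⟨hm1, hmM⟩, hmr⟩ := hm
    have hm0 : 0 < m := hm1
    have hsp := spart_pos a hm0
    have hspd := spart_dvd a m
    have hw0 : 0 < m / m.gcd (a ^ m) := Nat.div_pos (Nat.le_of_dvd hm0 hspd) hsp
    refine ⟨⟨⟨hsp, le_trans (Nat.le_of_dvd hm0 hspd) hmM⟩, spart_sm hm0⟩,
      ⟨hw0, Nat.div_le_div_right hmM⟩, coprime_div_spart ha hm0, ?_⟩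
    have : ((m.gcd (a ^ m) * (m / m.gcd (a ^ m)) : ℕ) : ZMod a) = ((m : ℕ) : ZMod a) := by
      rw [spart_mul_div]
    push_cast at this
    rw [this]
    exact hmr
  · rintro ⟨v, w⟩ hx
    simp only [mem_filter, mem_Icc, mem_sigma] at hx ⊢
    obtain ⟨⟨⟨hv1, hvM⟩, hvs⟩, ⟨hw1, hwM⟩, hwcop, hwr⟩ := hx
    constructor
    · constructor
      · exact Nat.one_le_iff_ne_zero.mpr (Nat.mul_ne_zero (by omega) (by omega))
      · calc v * w ≤ v * (M / v) := Nat.mul_le_mul_left v hwM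
          _ = M / v * v := mul_comm _ _
          _ ≤ M := Nat.div_mul_le_self M v
    · push_cast
      exact hwr
  · intro m hm
    simp only [mem_filter, mem_Icc] at hm
    exact spart_mul_div
  · rintro ⟨v, w⟩ hx
    simp only [mem_filter, mem_Icc, mem_sigma] at hx
    obtain ⟨⟨⟨hv1, hvM⟩, hvs⟩, ⟨hw1, hwM⟩, hwcop, hwr⟩ := hx
    have h1 : (v * w).gcd (a ^ (v * w)) = v := spart_mul hv1 hvs hwcop hw1
    have h2 : v * w / (v * w).gcd (a ^ (v * w)) = w := by
      rw [h1]; exact Nat.mul_div_cancel_left w hv1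
    exact Sigma.ext h1 (heq_of_eq h2)
  · intro m hm
    simp only [mem_filter, mem_Icc] at hm
    have hm0 : 0 < m := hm.1.1
    have := hmu (m.gcd (a ^ m)) (m / m.gcd (a ^ m))
      (coprime_of_sm (spart_sm hm0) (coprime_div_spart ha hm0))
    rw [spart_mul_div] at this
    exact this

noncomputable def Av (u : ℕ → ℂ) (a r v X : ℕ) : ℂ :=
  ∑ w ∈ (Finset.Icc 1 X).filter
    (fun w => Nat.Coprime w a ∧ (v : ZMod a) * (w : ZMod a) = (r : ZMod a)), u w

private lemma char_limit' (u : ℕ → ℂ) {a : ℕ} (ha : 0 < a)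
    (hχa : ∀ χ : DirichletCharacter ℂ a,
      Tendsto (fun N : ℕ => (N : ℂ)⁻¹ * ∑ n ∈ Finset.Icc 1 N, χ (n : ZMod a) * u n)
        atTop (nhds 0)) (r v : ℕ) :
    Tendsto (fun X : ℕ => (X : ℂ)⁻¹ * Av u a r v X) atTop (nhds 0) := by
  simp only [Av]
  exact char_limit u ha hχa r v

private lemma decomp' (u : ℕ → ℂ)
    (hmu : ∀ m n : ℕ, Nat.Coprime m n → u (m * n) = u m * u n)
    {a : ℕ} (ha : 0 < a) (r M : ℕ) :
    ∑ m ∈ (Icc 1 M).filter (fun m : ℕ => (m : ZMod a) = (r : ZMod a)), u m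
    = ∑ v ∈ (Icc 1 M).filter (fun v => v ∣ a ^ v), u v * Av u a r v (M / v) := by
  simp only [Av]
  exact decomp u hmu ha r M


private lemma mem_factored {a v : ℕ} (ha : 0 < a) (hv0 : 0 < v) (hv : v ∣ a ^ v) :
    v ∈ Nat.factoredNumbers a.primeFactors := by
  rw [Nat.mem_factoredNumbers]
  refine ⟨hv0.ne', fun p hp => ?_⟩
  have pp : p.Prime := Nat.prime_of_mem_primeFactorsList hp
  have pd : p ∣ v := Nat.dvd_of_mem_primeFactorsList hp
  exact Nat.mem_primeFactors.mpr ⟨pp, sm_primes hv pp pd, ha.ne'⟩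

private lemma summable_smooth (a : ℕ) :
    Summable (Set.indicator (Nat.factoredNumbers a.primeFactors)
      (fun v : ℕ => (v : ℝ)⁻¹)) := by
  let f : ℕ →* ℝ :=
    { toFun := fun n => (n : ℝ)⁻¹
      map_one' := by simp
      map_mul' := fun x y => by push_cast; rw [mul_inv] }
  have hf : ∀ {p : ℕ}, p.Prime → ‖f p‖ < 1 := by
    intro p hp
    have h2 : (1:ℝ) < p := by exact_mod_cast hp.one_lt
    have : |((p:ℝ))⁻¹| = (p:ℝ)⁻¹ := abs_of_nonneg (by positivity)
    simpa [f, Real.norm_eq_abs, this] using inv_lt_one_of_one_lt₀ h2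
  have h := (EulerProduct.summable_and_hasSum_factoredNumbers_prod_filter_prime_geometric
    (f := f) hf a.primeFactors).1
  rw [← summable_subtype_iff_indicator]
  exact h.of_norm

private lemma core (u : ℕ → ℂ)
    (hmu : ∀ m n : ℕ, Nat.Coprime m n → u (m * n) = u m * u n)
    (hb : ∀ n : ℕ, ‖u n‖ ≤ 1)
    {a : ℕ} (ha : 0 < a)
    (hχa : ∀ χ : DirichletCharacter ℂ a,
      Tendsto (fun N : ℕ => (N : ℂ)⁻¹ * ∑ n ∈ Finset.Icc 1 N, χ (n : ZMod a) * u n)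
        atTop (nhds 0)) (r : ℕ) :
    Tendsto (fun M : ℕ => (M : ℂ)⁻¹ *
      ∑ m ∈ (Icc 1 M).filter (fun m : ℕ => (m : ZMod a) = (r : ZMod a)), u m)
      atTop (nhds 0) := by
  have hnorm : ∀ n : ℕ, ‖u n‖ ≤ 1 := fun n => hb n
  have hdiv : ∀ v : ℕ, 0 < v → Tendsto (fun M : ℕ => M / v) atTop atTop := by
    intro v hv
    rw [Filter.tendsto_atTop]
    intro b
    filter_upwards [eventually_ge_atTop (b * v)] with M hM
    exact (Nat.le_div_iff_mul_le hv).mpr hM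
  -- bound on Av
  have hAvle : ∀ v X : ℕ, ‖Av u a r v X‖ ≤ (X : ℝ) := by
    intro v X
    calc ‖Av u a r v X‖ ≤ ∑ w ∈ (Icc 1 X).filter
          (fun w => Nat.Coprime w a ∧ (v : ZMod a) * (w : ZMod a) = (r : ZMod a)), ‖u w‖ :=
        norm_sum_le _ _
      _ ≤ ∑ w ∈ (Icc 1 X).filter
          (fun w => Nat.Coprime w a ∧ (v : ZMod a) * (w : ZMod a) = (r : ZMod a)), 1 :=
        Finset.sum_le_sum (fun w _ => hnorm w)
      _ = ((((Icc 1 X).filter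
          (fun w => Nat.Coprime w a ∧ (v : ZMod a) * (w : ZMod a) = (r : ZMod a))).card : ℕ) : ℝ) := by
        rw [Finset.sum_const]
        simp
      _ ≤ ((Icc 1 X).card : ℝ) := by exact_mod_cast Finset.card_filter_le _ _
      _ = (X : ℝ) := by simp [Nat.card_Icc]
  -- B3
  have B3 : ∀ v : ℕ, 0 < v →
      Tendsto (fun M : ℕ => (M : ℂ)⁻¹ * (u v * Av u a r v (M / v))) atTop (nhds 0) := by
    intro v hv
    have hg := (char_limit' u ha hχa r v).comp (hdiv v hv)
    have hgn : Tendsto (fun M : ℕ => ‖((M / v : ℕ) : ℂ)⁻¹ * Av u a r v (M / v)‖)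
        atTop (nhds 0) := by
      have hn := hg.norm
      rw [norm_zero] at hn
      exact hn
    refine squeeze_zero_norm (fun M => ?_) hgn
    show ‖(M : ℂ)⁻¹ * (u v * Av u a r v (M / v))‖ ≤ ‖((M / v : ℕ) : ℂ)⁻¹ * Av u a r v (M / v)‖
    rcases Nat.eq_zero_or_pos (M / v) with h0 | h0
    · have : Av u a r v (M / v) = 0 := by
        rw [h0]
        simp [Av]
      simp [this]
    · have hM1 : 0 < M := lt_of_lt_of_le h0 (Nat.div_le_self M v)
      have e2 : (0:ℝ) < ((M / v : ℕ) : ℝ) := by exact_mod_cast h0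
      have hinv : ((M : ℝ))⁻¹ ≤ (((M / v : ℕ) : ℝ))⁻¹ := by
        apply inv_anti₀ e2
        exact_mod_cast Nat.div_le_self M v
      have hstep : ‖u v * Av u a r v (M / v)‖ ≤ ‖Av u a r v (M / v)‖ := by
        rw [norm_mul]
        nlinarith [hnorm v, norm_nonneg (Av u a r v (M / v))]
      calc ‖(M : ℂ)⁻¹ * (u v * Av u a r v (M / v))‖
          = ((M : ℝ))⁻¹ * ‖u v * Av u a r v (M / v)‖ := by
            rw [norm_mul, norm_inv, Complex.norm_natCast]
        _ ≤ ((M : ℝ))⁻¹ * ‖Av u a r v (M / v)‖ :=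
            mul_le_mul_of_nonneg_left hstep (by positivity)
        _ ≤ (((M / v : ℕ) : ℝ))⁻¹ * ‖Av u a r v (M / v)‖ :=
            mul_le_mul_of_nonneg_right hinv (norm_nonneg _)
        _ = ‖((M / v : ℕ) : ℂ)⁻¹ * Av u a r v (M / v)‖ := by
            rw [norm_mul, norm_inv, Complex.norm_natCast]
  -- B4
  have B4 : ∀ V : ℕ, Tendsto (fun M : ℕ => (M : ℂ)⁻¹ *
      ∑ v ∈ (Icc 1 V).filter (fun v => v ∣ a ^ v), u v * Av u a r v (M / v))
      atTop (nhds 0) := by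
    intro V
    have heq : (fun M : ℕ => (M : ℂ)⁻¹ *
        ∑ v ∈ (Icc 1 V).filter (fun v => v ∣ a ^ v), u v * Av u a r v (M / v))
        = fun M : ℕ => ∑ v ∈ (Icc 1 V).filter (fun v => v ∣ a ^ v),
            (M : ℂ)⁻¹ * (u v * Av u a r v (M / v)) := funext fun M => Finset.mul_sum _ _ _
    rw [heq]
    have := tendsto_finset_sum ((Icc 1 V).filter (fun v => v ∣ a ^ v))
      (fun v hv => B3 v (mem_Icc.mp (mem_filter.mp hv).1).1)
    simpa using this
  -- final glue
  rw [NormedAddCommGroup.tendsto_nhds_zero]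
  intro ε hε
  obtain ⟨s₀, hs₀⟩ := summable_iff_vanishing.mp (summable_smooth a)
    (Metric.ball 0 (ε / 2)) (Metric.ball_mem_nhds 0 (by positivity))
  set V := max (s₀.sup id) 1 with hV
  have hmainlim := B4 V
  rw [NormedAddCommGroup.tendsto_nhds_zero] at hmainlim
  filter_upwards [hmainlim (ε / 2) (by positivity), eventually_ge_atTop V,
    eventually_ge_atTop 1] with M hmain hMV hM1
  have hV1 : 1 ≤ V := le_max_right _ 1
  -- split
  have hIcc : Icc 1 M = Icc 1 V ∪ Ioc V M := by
    ext x
    simp only [mem_Icc, mem_union, mem_Ioc]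
    omega
  have hdisj : Disjoint ((Icc 1 V).filter (fun v => v ∣ a ^ v))
      ((Ioc V M).filter (fun v => v ∣ a ^ v)) := by
    rw [Finset.disjoint_left]
    intro x hx hx'
    simp only [mem_filter, mem_Icc, mem_Ioc] at hx hx'
    omega
  rw [decomp' u hmu ha r M, hIcc, filter_union, Finset.sum_union hdisj, mul_add]
  set D := (Ioc V M).filter (fun v => v ∣ a ^ v) with hD
  set t := ∑ v ∈ D, ((v : ℝ))⁻¹ with ht
  have htail : ‖(M : ℂ)⁻¹ * ∑ v ∈ D, u v * Av u a r v (M / v)‖ ≤ t := by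
    rw [norm_mul, norm_inv, Complex.norm_natCast]
    have h1 : ‖∑ v ∈ D, u v * Av u a r v (M / v)‖ ≤ (M : ℝ) * t := by
      calc ‖∑ v ∈ D, u v * Av u a r v (M / v)‖ ≤ ∑ v ∈ D, ‖u v * Av u a r v (M / v)‖ :=
          norm_sum_le _ _
        _ ≤ ∑ v ∈ D, (M : ℝ) * ((v : ℝ))⁻¹ := by
            refine Finset.sum_le_sum (fun v hv => ?_)
            have hv1 : 0 < v := by
              have := (mem_Ioc.mp (mem_filter.mp hv).1).1
              omega
            have hstep : ‖u v * Av u a r v (M / v)‖ ≤ ‖Av u a r v (M / v)‖ := by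
              rw [norm_mul]
              nlinarith [hnorm v, norm_nonneg (Av u a r v (M / v))]
            calc ‖u v * Av u a r v (M / v)‖ ≤ ‖Av u a r v (M / v)‖ := hstep
              _ ≤ ((M / v : ℕ) : ℝ) := hAvle v (M / v)
              _ ≤ (M : ℝ) / (v : ℝ) := Nat.cast_div_le
              _ = (M : ℝ) * ((v : ℝ))⁻¹ := div_eq_mul_inv _ _
        _ = (M : ℝ) * t := by rw [ht, Finset.mul_sum]
    have hM0 : (0:ℝ) < (M : ℝ) := by exact_mod_cast hM1
    calc ((M : ℝ))⁻¹ * ‖∑ v ∈ D, u v * Av u a r v (M / v)‖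
        ≤ ((M : ℝ))⁻¹ * ((M : ℝ) * t) := mul_le_mul_of_nonneg_left h1 (by positivity)
      _ = t := by field_simp
  have htpos : 0 ≤ t := Finset.sum_nonneg (fun v _ => by positivity)
  have hts : t < ε / 2 := by
    have hdisj2 : Disjoint D s₀ := by
      rw [Finset.disjoint_left]
      intro x hx hx'
      have hx1 : V < x := (mem_Ioc.mp (mem_filter.mp hx).1).1
      have : x ≤ s₀.sup id := Finset.le_sup (f := id) hx'
      have : x ≤ V := le_trans this (le_max_left _ _)
      omega
    have := hs₀ D hdisj2
    rw [Metric.mem_ball, Real.dist_0_eq_abs] at this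
    have heq : ∑ v ∈ D, Set.indicator (Nat.factoredNumbers a.primeFactors)
        (fun v : ℕ => (v : ℝ)⁻¹) v = t := by
      refine Finset.sum_congr rfl (fun v hv => ?_)
      have hv' := mem_filter.mp hv
      have hv1 : 0 < v := by
        have := (mem_Ioc.mp hv'.1).1
        omega
      exact Set.indicator_of_mem (mem_factored ha hv1 hv'.2) _
    rw [heq] at this
    calc t ≤ |t| := le_abs_self t
      _ < ε / 2 := this
  calc ‖(M : ℂ)⁻¹ * ∑ v ∈ (Icc 1 V).filter (fun v => v ∣ a ^ v), u v * Av u a r v (M / v)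
        + (M : ℂ)⁻¹ * ∑ v ∈ D, u v * Av u a r v (M / v)‖
      ≤ ‖(M : ℂ)⁻¹ * ∑ v ∈ (Icc 1 V).filter (fun v => v ∣ a ^ v), u v * Av u a r v (M / v)‖
        + ‖(M : ℂ)⁻¹ * ∑ v ∈ D, u v * Av u a r v (M / v)‖ := norm_add_le _ _
    _ < ε / 2 + ε / 2 := add_lt_add_of_lt_of_le hmain (le_trans htail hts.le)
    _ = ε := by ring

theorem aperiodic_of_mean_zero_against_characters (u : ℕ → ℂ)
    (h1 : u 1 = 1) (hm : ∀ m n : ℕ, Nat.Coprime m n → u (m * n) = u m * u n)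
    (hb : ∀ n : ℕ, ‖u n‖ ≤ 1)
    (hχ : ∀ q : ℕ, 0 < q → ∀ χ : DirichletCharacter ℂ q,
      Tendsto (fun N : ℕ => (N : ℂ)⁻¹ * ∑ n ∈ Finset.Icc 1 N, χ (n : ZMod q) * u n)
        atTop (nhds 0)) :
    ∀ a r : ℕ, 0 < a → 0 < r →
      Tendsto (fun N : ℕ => (N : ℂ)⁻¹ * ∑ n ∈ Finset.Icc 1 N, u (a * n + r))
        atTop (nhds 0) := by
  intro a r ha hr
  have hcore := core u hm hb ha (hχ a ha) r
  have hre : ∀ N : ℕ,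
      ∑ m ∈ (Icc 1 (a * N + r)).filter (fun m : ℕ => (m : ZMod a) = (r : ZMod a)), u m
      = (∑ m ∈ (Icc 1 r).filter (fun m : ℕ => (m : ZMod a) = (r : ZMod a)), u m)
        + ∑ n ∈ Icc 1 N, u (a * n + r) := by
    intro N
    have hIcc : Icc 1 (a * N + r) = Icc 1 r ∪ Ioc r (a * N + r) := by
      ext x
      simp only [mem_Icc, mem_union, mem_Ioc]
      omega
    have hdisj : Disjoint ((Icc 1 r).filter (fun m : ℕ => (m : ZMod a) = (r : ZMod a)))
        ((Ioc r (a * N + r)).filter (fun m : ℕ => (m : ZMod a) = (r : ZMod a))) := by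
      rw [Finset.disjoint_left]
      intro x hx hx'
      have h1 := (mem_Icc.mp (mem_filter.mp hx).1).2
      have h2 := (mem_Ioc.mp (mem_filter.mp hx').1).1
      omega
    rw [hIcc, filter_union, Finset.sum_union hdisj]
    congr 1
    have hmem : ∀ m ∈ (Ioc r (a * N + r)).filter
        (fun m : ℕ => (m : ZMod a) = (r : ZMod a)),
        a * ((m - r) / a) + r = m ∧ 1 ≤ (m - r) / a ∧ (m - r) / a ≤ N := by
      intro m hm'
      obtain ⟨hm1, hm2⟩ := mem_filter.mp hm'
      obtain ⟨hrm, hmN⟩ := mem_Ioc.mp hm1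
      have hmod : r ≡ m [MOD a] := (ZMod.natCast_eq_natCast_iff r m a).mp hm2.symm
      obtain ⟨k, hk⟩ := (Nat.modEq_iff_dvd' hrm.le).mp hmod
      have hk1 : 1 ≤ k := by
        rcases Nat.eq_zero_or_pos k with h | h
        · rw [h, mul_zero] at hk
          omega
        · exact h
      have hkN : k ≤ N := by
        have h2 : m - r ≤ a * N := Nat.sub_le_iff_le_add.mpr hmN
        rw [hk] at h2
        exact Nat.le_of_mul_le_mul_left h2 ha
      have hdiv : (m - r) / a = k := by rw [hk, Nat.mul_div_cancel_left k ha]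
      refine ⟨?_, by omega, by omega⟩
      rw [hdiv, ← hk]
      exact Nat.sub_add_cancel hrm.le
    refine Finset.sum_nbij' (fun m => (m - r) / a) (fun n => a * n + r) ?_ ?_ ?_ ?_ ?_
    · intro m hm'
      obtain ⟨_, h2, h3⟩ := hmem m hm'
      exact mem_Icc.mpr ⟨h2, h3⟩
    · intro n hn
      obtain ⟨hn1, hn2⟩ := mem_Icc.mp hn
      refine mem_filter.mpr ⟨mem_Ioc.mpr ⟨?_, ?_⟩, ?_⟩
      · exact Nat.lt_add_of_pos_left (Nat.mul_pos ha hn1)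
      · exact Nat.add_le_add_right (Nat.mul_le_mul_left a hn2) r
      · push_cast
        simp [ZMod.natCast_self]
    · intro m hm'
      exact (hmem m hm').1
    · intro n _
      simp [Nat.add_sub_cancel, Nat.mul_div_cancel_left _ ha]
    · intro m hm'
      rw [(hmem m hm').1]
  have hcomp : Tendsto (fun N : ℕ => a * N + r) atTop atTop := by
    apply tendsto_atTop_mono (fun N => ?_) tendsto_id
    calc N = 1 * N := (one_mul N).symm
      _ ≤ a * N := Nat.mul_le_mul_right N ha
      _ ≤ a * N + r := Nat.le_add_right _ _
  have h2 : Tendsto (fun N : ℕ => (N : ℂ)⁻¹ *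
      ∑ m ∈ (Icc 1 (a * N + r)).filter (fun m : ℕ => (m : ZMod a) = (r : ZMod a)), u m)
      atTop (nhds 0) := by
    have hb2 : Tendsto (fun N : ℕ => ((a : ℝ) + r) * ‖(((a * N + r : ℕ)) : ℂ)⁻¹ *
        ∑ m ∈ (Icc 1 (a * N + r)).filter (fun m : ℕ => (m : ZMod a) = (r : ZMod a)), u m‖)
        atTop (nhds 0) := by
      have hn := (hcore.comp hcomp).norm
      rw [norm_zero] at hn
      simpa using hn.const_mul ((a : ℝ) + r)
    refine squeeze_zero_norm' ?_ hb2
    filter_upwards [eventually_ge_atTop 1] with N hN1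
    have hpos : (0 : ℝ) < ((a * N + r : ℕ) : ℝ) := by
      have : 0 < a * N + r := by omega
      exact_mod_cast this
    have hN0 : (0 : ℝ) < (N : ℝ) := by exact_mod_cast hN1
    have har : (0 : ℝ) < (a : ℝ) + r := by
      have : (0:ℝ) < (a:ℝ) := by exact_mod_cast ha
      have : (0:ℝ) ≤ (r:ℝ) := by positivity
      linarith
    have h' : ((a * N + r : ℕ) : ℝ) ≤ ((a : ℝ) + r) * N := by
      push_cast
      have hr1 : (1 : ℝ) ≤ (r : ℝ) := by exact_mod_cast hr
      have hN1' : (1 : ℝ) ≤ (N : ℝ) := by exact_mod_cast hN1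
      nlinarith
    have hkey : ((N : ℝ))⁻¹ ≤ ((a : ℝ) + r) * (((a * N + r : ℕ)) : ℝ)⁻¹ := by
      have e1 : ((N : ℝ))⁻¹ = ((a : ℝ) + r) * (((a : ℝ) + r) * N)⁻¹ := by
        rw [mul_inv, ← mul_assoc, mul_inv_cancel₀ har.ne', one_mul]
      rw [e1]
      exact mul_le_mul_of_nonneg_left (inv_anti₀ hpos h') har.le
    set S := ∑ m ∈ (Icc 1 (a * N + r)).filter (fun m : ℕ => (m : ZMod a) = (r : ZMod a)), u m
      with hS
    calc ‖(N : ℂ)⁻¹ * S‖ = ((N : ℝ))⁻¹ * ‖S‖ := by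
          rw [norm_mul, norm_inv, Complex.norm_natCast]
      _ ≤ (((a : ℝ) + r) * (((a * N + r : ℕ)) : ℝ)⁻¹) * ‖S‖ :=
          mul_le_mul_of_nonneg_right hkey (norm_nonneg _)
      _ = ((a : ℝ) + r) * ‖(((a * N + r : ℕ)) : ℂ)⁻¹ * S‖ := by
          rw [norm_mul, norm_inv, Complex.norm_natCast]
          ring
  have h3 : Tendsto (fun N : ℕ => (N : ℂ)⁻¹ *
      (∑ m ∈ (Icc 1 r).filter (fun m : ℕ => (m : ZMod a) = (r : ZMod a)), u m))
      atTop (nhds 0) := by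
    have hinv : Tendsto (fun N : ℕ => ((N : ℂ))⁻¹) atTop (nhds 0) := by
      refine squeeze_zero_norm (fun N => ?_) tendsto_inv_atTop_nhds_zero_nat
      rw [norm_inv, Complex.norm_natCast]
    simpa using hinv.mul_const _
  have hfun : (fun N : ℕ => (N : ℂ)⁻¹ * ∑ n ∈ Finset.Icc 1 N, u (a * n + r))
      = fun N : ℕ => (N : ℂ)⁻¹ *
          (∑ m ∈ (Icc 1 (a * N + r)).filter (fun m : ℕ => (m : ZMod a) = (r : ZMod a)), u m)
        - (N : ℂ)⁻¹ *
          (∑ m ∈ (Icc 1 r).filter (fun m : ℕ => (m : ZMod a) = (r : ZMod a)), u m) := by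
    funext N
    rw [hre N]
    ring
  rw [hfun]
  simpa using h2.sub h3
end
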